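/- arXiv:2308.15036 — 7 statements merged into one kernel-verified Lean document; each statement's English description precedes it below -/
import Mathlib

section
/- Let 0<β<1 and p>1/β with q=p/(p-1). Suppose ρ:(0,1]→ℝ is measurable and the function t↦t^{1-β}ρ(t) belongs to L^p[0,1]. Then for every t∈[0,1], |∫₀ᵗ (t/(t-s))^{1-β} ρ(s) ds| ≤ (2^{1/q} t^{β-1/p} / (qβ-q+1)^{1/q}) · (∫₀ᵗ s^{p(1-β)} |ρ(s)|^p ds)^{1/p}. -/
open MeasureTheory Set

lemma aux_rpow_add_le {x y c : ℝ} (hx : 0 ≤ x) (hy : 0 ≤ y)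
    (hc0 : 0 ≤ c) (hc1 : c ≤ 1) : (x + y) ^ c ≤ x ^ c + y ^ c := by
  have h := NNReal.rpow_add_le_add_rpow x.toNNReal y.toNNReal hc0 hc1
  have h' := NNReal.coe_le_coe.2 h
  push_cast at h'
  rwa [Real.coe_toNNReal _ hx, Real.coe_toNNReal _ hy] at h'

/-- Lemma 2.3: weakly singular integral inequality. -/
theorem stmt_0 (β p q : ℝ) (hβ0 : 0 < β) (hβ1 : β < 1)
    (hp : 1 / β < p) (hq : q = p / (p - 1))
    (ρ : ℝ → ℝ) (hρ : Measurable ρ)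
    (hLp : IntegrableOn (fun t => |t ^ (1 - β) * ρ t| ^ p) (Ioc (0:ℝ) 1)) :
    ∀ t ∈ Icc (0:ℝ) 1,
      |∫ s in Ioo (0:ℝ) t, (t / (t - s)) ^ (1 - β) * ρ s| ≤
        (2:ℝ) ^ (1 / q) * t ^ (β - 1 / p) / (q * β - q + 1) ^ (1 / q) *
          (∫ s in Ioo (0:ℝ) t, s ^ (p * (1 - β)) * |ρ s| ^ p) ^ (1 / p) := by
  intro t ht
  obtain ⟨ht0, ht1⟩ := ht
  have hβp : 0 < 1 - β := by linarith
  have h1β : 1 < 1 / β := by rw [lt_div_iff₀ hβ0]; linarith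
  have hp1 : 1 < p := h1β.trans hp
  have hp0 : 0 < p := by linarith
  have hpq : p.HolderConjugate q := (Real.holderConjugate_iff_eq_conjExponent hp1).2 hq
  have hqp : q.HolderConjugate p := hpq.symm
  have hq1 : 1 < q := hqp.lt
  have hq0 : 0 < q := hqp.pos
  set a : ℝ := q * (1 - β) with ha
  have ha0 : 0 < a := mul_pos hq0 hβp
  have hpinv : p⁻¹ < β := by
    rw [inv_lt_comm₀ hp0 hβ0]; rwa [one_div] at hp
  have ha1 : a < 1 := by
    have h1 : 1 - β < q⁻¹ := by
      rw [← hpq.one_sub_inv]; linarith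
    calc a < q * q⁻¹ := by exact mul_lt_mul_of_pos_left h1 hq0
    _ = 1 := mul_inv_cancel₀ hq0.ne'
  have h1a : 0 < 1 - a := by linarith
  have hqa : q * β - q + 1 = 1 - a := by rw [ha]; ring
  have hexp : (1 - a) * (1 / q) = β - 1 / p := by
    have h1 : a / q = 1 - β := by
      rw [ha]; field_simp
    have h2 : (1 : ℝ) / q = 1 - 1 / p := by
      rw [one_div, one_div, ← hpq.one_sub_inv]
    calc (1 - a) * (1 / q) = 1 / q - a / q := by ring
    _ = (1 - 1/p) - (1 - β) := by rw [h1, h2]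
    _ = β - 1/p := by ring
  rcases eq_or_lt_of_le ht0 with h | ht0'
  · -- t = 0 case
    rw [← h]
    simp only [Set.Ioo_self, Measure.restrict_empty, integral_zero_measure, abs_zero]
    refine mul_nonneg (div_nonneg (mul_nonneg (Real.rpow_nonneg (by norm_num) _)
      (Real.rpow_nonneg le_rfl _)) (Real.rpow_nonneg (by linarith) _))
      (Real.rpow_nonneg le_rfl _)
  -- main case 0 < t
  set f : ℝ → ℝ := fun s => (t / (t - s)) ^ (1 - β) * s ^ (-(1 - β)) with hfdef
  set g : ℝ → ℝ := fun s => s ^ (1 - β) * |ρ s| with hgdef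
  have hfpos : ∀ s ∈ Ioo (0:ℝ) t, 0 < f s := by
    intro s hs
    have hts : 0 < t - s := sub_pos.2 hs.2
    exact mul_pos (Real.rpow_pos_of_pos (div_pos ht0' hts) _)
      (Real.rpow_pos_of_pos hs.1 _)
  have hgnon : ∀ s ∈ Ioo (0:ℝ) t, 0 ≤ g s := by
    intro s hs
    exact mul_nonneg (Real.rpow_nonneg hs.1.le _) (abs_nonneg _)
  have hfm : Measurable f := by rw [hfdef]; fun_prop
  have hgm : Measurable g := by rw [hgdef]; fun_prop
  -- Step A : |∫ K ρ| ≤ ∫ f g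
  have hKfg : EqOn (fun s => |(t / (t - s)) ^ (1 - β) * ρ s|) (fun s => f s * g s)
      (Ioo (0:ℝ) t) := by
    intro s hs
    show |(t / (t - s)) ^ (1 - β) * ρ s| = f s * g s
    have hts : 0 < t - s := sub_pos.2 hs.2
    have h2 : s ^ (-(1-β)) * s ^ (1-β) = 1 := by
      rw [← Real.rpow_add hs.1]; simp
    have : f s * g s = (t / (t - s)) ^ (1 - β) * ((s ^ (-(1-β)) * s ^ (1-β)) * |ρ s|) := by
      rw [hfdef, hgdef]; ring
    rw [this, h2, one_mul]
    simp only [abs_mul, abs_of_nonneg (Real.rpow_nonneg (div_pos ht0' hts).le (1-β))]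
  have stepA : |∫ s in Ioo (0:ℝ) t, (t / (t - s)) ^ (1 - β) * ρ s| ≤
      ∫ s in Ioo (0:ℝ) t, f s * g s := by
    calc |∫ s in Ioo (0:ℝ) t, (t / (t - s)) ^ (1 - β) * ρ s|
        ≤ ∫ s in Ioo (0:ℝ) t, |(t / (t - s)) ^ (1 - β) * ρ s| := by
          simpa only [Real.norm_eq_abs] using
            norm_integral_le_integral_norm (μ := volume.restrict (Ioo (0:ℝ) t))
              (f := fun s => (t / (t - s)) ^ (1 - β) * ρ s)
    _ = ∫ s in Ioo (0:ℝ) t, f s * g s := setIntegral_congr_fun measurableSet_Ioo hKfg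
  -- integrability of the singular bound
  have hia : IntervalIntegrable (fun x : ℝ => x ^ (-a)) volume 0 t :=
    intervalIntegral.intervalIntegrable_rpow' (by linarith)
  have hib : IntervalIntegrable (fun x : ℝ => (t - x) ^ (-a)) volume 0 t := by
    simpa using (hia.comp_sub_left t).symm
  have hia' : IntegrableOn (fun x : ℝ => x ^ (-a)) (Ioo 0 t) :=
    (hia.1).mono_set Ioo_subset_Ioc_self
  have hib' : IntegrableOn (fun x : ℝ => (t - x) ^ (-a)) (Ioo 0 t) :=
    (hib.1).mono_set Ioo_subset_Ioc_self
  have hbound_int : IntegrableOn (fun s : ℝ => s ^ (-a) + (t - s) ^ (-a)) (Ioo 0 t) :=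
    hia'.add hib'
  have hne : -a + 1 ≠ 0 := by linarith
  have hval1 : ∫ s in (0:ℝ)..t, s ^ (-a) = t ^ (1 - a) / (1 - a) := by
    rw [integral_rpow (Or.inl (by linarith))]
    rw [Real.zero_rpow hne]
    have e : -a + 1 = 1 - a := by ring
    rw [e, sub_zero]
  have hval2 : ∫ s in (0:ℝ)..t, (t - s) ^ (-a) = t ^ (1 - a) / (1 - a) := by
    have := intervalIntegral.integral_comp_sub_left (a := (0:ℝ)) (b := t)
      (fun x : ℝ => x ^ (-a)) t
    simpa [this] using hval1
  have hIoo1 : ∀ (F : ℝ → ℝ), ∫ s in Ioo (0:ℝ) t, F s = ∫ s in (0:ℝ)..t, F s := by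
    intro F
    rw [intervalIntegral.integral_of_le ht0'.le, MeasureTheory.integral_Ioc_eq_integral_Ioo]
  have hbound_val : ∫ s in Ioo (0:ℝ) t, (s ^ (-a) + (t - s) ^ (-a)) =
      2 * t ^ (1 - a) / (1 - a) := by
    rw [integral_add hia' hib', hIoo1 (fun s => s ^ (-a)), hIoo1 (fun s => (t - s) ^ (-a)),
      hval1, hval2]
    ring
  -- pointwise bound f^q ≤ s^{-a} + (t-s)^{-a}
  have hfq_le : ∀ s ∈ Ioo (0:ℝ) t, f s ^ q ≤ s ^ (-a) + (t - s) ^ (-a) := by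
    intro s hs
    have hs0 : 0 < s := hs.1
    have hts : 0 < t - s := sub_pos.2 hs.2
    have hdiv : 0 < t / (t - s) := div_pos ht0' hts
    have e : f s ^ q = t ^ a * ((t - s) ^ (-a) * s ^ (-a)) := by
      rw [hfdef]
      rw [Real.mul_rpow (Real.rpow_nonneg hdiv.le _) (Real.rpow_nonneg hs0.le _),
        ← Real.rpow_mul hdiv.le, ← Real.rpow_mul hs0.le]
      have e1 : (1 - β) * q = a := by rw [ha]; ring
      have e2 : -(1 - β) * q = -a := by rw [ha]; ring
      rw [e1, e2, Real.div_rpow ht0'.le hts.le, Real.rpow_neg hts.le, div_eq_mul_inv]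
      ring
    have key : t ^ a ≤ s ^ a + (t - s) ^ a := by
      have h := aux_rpow_add_le hs0.le hts.le ha0.le ha1.le
      rwa [add_sub_cancel] at h
    have hss : s ^ a * s ^ (-a) = 1 := by rw [← Real.rpow_add hs0]; simp
    have htt : (t - s) ^ a * (t - s) ^ (-a) = 1 := by rw [← Real.rpow_add hts]; simp
    calc f s ^ q = t ^ a * ((t - s) ^ (-a) * s ^ (-a)) := e
    _ ≤ (s ^ a + (t - s) ^ a) * ((t - s) ^ (-a) * s ^ (-a)) := by
        apply mul_le_mul_of_nonneg_right key
        positivity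
    _ = (s ^ a * s ^ (-a)) * (t - s) ^ (-a) + ((t - s) ^ a * (t - s) ^ (-a)) * s ^ (-a) := by
        ring
    _ = s ^ (-a) + (t - s) ^ (-a) := by rw [hss, htt, one_mul, one_mul, add_comm]
  have hfq_int : IntegrableOn (fun s => f s ^ q) (Ioo (0:ℝ) t) := by
    have hm2 : Measurable fun s => f s ^ q := by fun_prop
    apply Integrable.mono' hbound_int hm2.aestronglyMeasurable
    rw [ae_restrict_iff' measurableSet_Ioo]
    filter_upwards with s hs
    rw [Real.norm_eq_abs, abs_of_nonneg (Real.rpow_pos_of_pos (hfpos s hs) q).le]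
    exact hfq_le s hs
  have hsub : Ioo (0:ℝ) t ⊆ Ioc 0 1 := fun s hs => ⟨hs.1, hs.2.le.trans ht1⟩
  have hgp_int : IntegrableOn (fun s => g s ^ p) (Ioo (0:ℝ) t) := by
    apply (hLp.mono_set hsub).congr_fun _ measurableSet_Ioo
    intro s hs
    rw [hgdef]
    simp only
    rw [abs_mul, abs_of_nonneg (Real.rpow_nonneg hs.1.le _)]
  -- Memℒp statements
  have hAq : ENNReal.ofReal q ≠ 0 := by
    rw [Ne, ENNReal.ofReal_eq_zero, not_le]; exact hq0
  have hBq : ENNReal.ofReal q ≠ ⊤ := ENNReal.ofReal_ne_top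
  have hAp : ENNReal.ofReal p ≠ 0 := by
    rw [Ne, ENNReal.ofReal_eq_zero, not_le]; exact hp0
  have hBp : ENNReal.ofReal p ≠ ⊤ := ENNReal.ofReal_ne_top
  have hf_Lp : MemLp f (ENNReal.ofReal q) (volume.restrict (Ioo (0:ℝ) t)) := by
    rw [← memLp_norm_rpow_iff hfm.aestronglyMeasurable hAq hBq,
      ENNReal.toReal_ofReal hq0.le, ENNReal.div_self hAq hBq, memLp_one_iff_integrable]
    apply hfq_int.congr
    rw [Filter.eventuallyEq_iff_exists_mem]
    refine ⟨Ioo (0:ℝ) t, self_mem_ae_restrict measurableSet_Ioo, fun s hs => ?_⟩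
    show f s ^ q = ‖f s‖ ^ q
    rw [Real.norm_eq_abs, abs_of_pos (hfpos s hs)]
  have hg_Lp : MemLp g (ENNReal.ofReal p) (volume.restrict (Ioo (0:ℝ) t)) := by
    rw [← memLp_norm_rpow_iff hgm.aestronglyMeasurable hAp hBp,
      ENNReal.toReal_ofReal hp0.le, ENNReal.div_self hAp hBp, memLp_one_iff_integrable]
    apply hgp_int.congr
    rw [Filter.eventuallyEq_iff_exists_mem]
    refine ⟨Ioo (0:ℝ) t, self_mem_ae_restrict measurableSet_Ioo, fun s hs => ?_⟩
    show g s ^ p = ‖g s‖ ^ p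
    rw [Real.norm_eq_abs, abs_of_nonneg (hgnon s hs)]
  have hf_nn : 0 ≤ᵐ[volume.restrict (Ioo (0:ℝ) t)] f :=
    (ae_restrict_iff' measurableSet_Ioo).2 (ae_of_all _ fun s hs => (hfpos s hs).le)
  have hg_nn : 0 ≤ᵐ[volume.restrict (Ioo (0:ℝ) t)] g :=
    (ae_restrict_iff' measurableSet_Ioo).2 (ae_of_all _ fun s hs => hgnon s hs)
  have holder := MeasureTheory.integral_mul_le_Lp_mul_Lq_of_nonneg hqp hf_nn hg_nn hf_Lp hg_Lp
  -- bound the kernel Lq integral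
  have hIq : ∫ s in Ioo (0:ℝ) t, f s ^ q ≤ 2 * t ^ (1 - a) / (1 - a) := by
    rw [← hbound_val]
    exact setIntegral_mono_on hfq_int hbound_int measurableSet_Ioo hfq_le
  have hIq0 : 0 ≤ ∫ s in Ioo (0:ℝ) t, f s ^ q := by
    apply integral_nonneg_of_ae
    exact (ae_restrict_iff' measurableSet_Ioo).2
      (ae_of_all _ fun s hs => (Real.rpow_pos_of_pos (hfpos s hs) q).le)
  have hgp_nn : 0 ≤ ∫ s in Ioo (0:ℝ) t, g s ^ p := by
    apply integral_nonneg_of_ae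
    exact (ae_restrict_iff' measurableSet_Ioo).2
      (ae_of_all _ fun s hs => Real.rpow_nonneg (hgnon s hs) p)
  have hgp_eq : ∫ s in Ioo (0:ℝ) t, g s ^ p =
      ∫ s in Ioo (0:ℝ) t, s ^ (p * (1 - β)) * |ρ s| ^ p := by
    apply setIntegral_congr_fun measurableSet_Ioo
    intro s hs
    rw [hgdef]
    simp only
    rw [Real.mul_rpow (Real.rpow_nonneg hs.1.le _) (abs_nonneg _),
      ← Real.rpow_mul hs.1.le, mul_comm (1 - β) p]
  have hconst : (2 * t ^ (1 - a) / (1 - a)) ^ (1 / q) =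
      (2:ℝ) ^ (1 / q) * t ^ (β - 1 / p) / (1 - a) ^ (1 / q) := by
    rw [Real.div_rpow (by positivity) h1a.le,
      Real.mul_rpow (by norm_num) (Real.rpow_nonneg ht0'.le _),
      ← Real.rpow_mul ht0'.le, hexp]
  calc |∫ s in Ioo (0:ℝ) t, (t / (t - s)) ^ (1 - β) * ρ s|
      ≤ ∫ s in Ioo (0:ℝ) t, f s * g s := stepA
    _ ≤ (∫ s in Ioo (0:ℝ) t, f s ^ q) ^ (1/q) * (∫ s in Ioo (0:ℝ) t, g s ^ p) ^ (1/p) :=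
        holder
    _ ≤ (2 * t ^ (1 - a) / (1 - a)) ^ (1/q) * (∫ s in Ioo (0:ℝ) t, g s ^ p) ^ (1/p) := by
        apply mul_le_mul_of_nonneg_right _ (Real.rpow_nonneg hgp_nn _)
        exact Real.rpow_le_rpow hIq0 hIq (by positivity)
    _ = (2:ℝ) ^ (1 / q) * t ^ (β - 1 / p) / (q * β - q + 1) ^ (1 / q) *
          (∫ s in Ioo (0:ℝ) t, s ^ (p * (1 - β)) * |ρ s| ^ p) ^ (1 / p) := by
        rw [hqa, hconst, hgp_eq]
end

section
/- Let 0<β<1 and suppose ρ is continuous on (0,+∞) and Lebesgue integrable on every bounded subinterval of [0,+∞). If the function t↦t^β ρ(t) is nonincreasing on (0,+∞), then the function y(t)=∫₀ᵗ (t-s)^{β-1} ρ(s) ds is nonincreasing on (0,+∞). -/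
open MeasureTheory Set

/-- Lemma 2.6 (1): if `t^β ρ(t)` is nonincreasing on `(0,∞)`, then the fractional
integral function `y(t) = ∫₀ᵗ (t-s)^(β-1) ρ(s) ds` is nonincreasing on `(0,∞)`. -/
theorem stmt_2 (β : ℝ) (hβ0 : 0 < β) (hβ1 : β < 1)
    (ρ : ℝ → ℝ) (hρc : ContinuousOn ρ (Ioi 0))
    (hρint : ∀ T > 0, IntegrableOn ρ (Ioc (0:ℝ) T))
    (hmono : AntitoneOn (fun t => t ^ β * ρ t) (Ioi (0:ℝ))) :
    AntitoneOn (fun t => ∫ s in Ioo (0:ℝ) t, (t - s) ^ (β - 1) * ρ s) (Ioi (0:ℝ)) := by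
  -- Step 1: integrability of the fractional integrand
  have hInt : ∀ t > (0:ℝ), IntervalIntegrable (fun s => (t - s) ^ (β - 1) * ρ s) volume 0 t := by
    intro t ht
    have h2 : (0:ℝ) < t / 2 := by linarith
    have hmeasρ : AEStronglyMeasurable ρ (volume.restrict (Ioc (0:ℝ) t)) :=
      (hρint t ht).aestronglyMeasurable
    have hmeasF : AEStronglyMeasurable (fun s => (t - s) ^ (β - 1) * ρ s)
        (volume.restrict (Ioc (0:ℝ) t)) := by
      apply AEStronglyMeasurable.mul _ hmeasρ
      apply Measurable.aestronglyMeasurable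
      fun_prop
    rw [intervalIntegrable_iff_integrableOn_Ioc_of_le ht.le]
    have hsplit : Ioc (0:ℝ) t = Ioc 0 (t/2) ∪ Ioc (t/2) t :=
      (Ioc_union_Ioc_eq_Ioc (by linarith) (by linarith)).symm
    rw [hsplit]
    apply IntegrableOn.union
    · -- near 0 : bound by (t/2)^(β-1) * |ρ s|
      apply Integrable.mono (g := fun s => (t/2) ^ (β - 1) * ‖ρ s‖)
        (((hρint (t/2) h2).norm).const_mul _)
      · exact hmeasF.mono_measure (Measure.restrict_mono (by rw [hsplit]; exact subset_union_left) le_rfl)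
      · filter_upwards [ae_restrict_mem measurableSet_Ioc] with s hs
        obtain ⟨hs0, hs1⟩ := hs
        have hts : (0:ℝ) < t - s := by linarith
        have h1 : (t - s) ^ (β - 1) ≤ (t/2) ^ (β - 1) :=
          Real.rpow_le_rpow_of_nonpos h2 (by linarith) (by linarith)
        have h2' : 0 ≤ (t - s) ^ (β - 1) := Real.rpow_nonneg hts.le _
        have h3 : 0 ≤ (t/2) ^ (β - 1) := Real.rpow_nonneg h2.le _
        simp only [Real.norm_eq_abs, abs_abs, abs_mul, abs_of_nonneg h2', abs_of_nonneg h3]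
        exact mul_le_mul_of_nonneg_right h1 (abs_nonneg _)
    · -- near t : ρ is bounded, (t-s)^(β-1) is integrable
      obtain ⟨M, hM⟩ := (isCompact_Icc (a := t/2) (b := t)).exists_bound_of_continuousOn
        (hρc.mono (fun x hx => lt_of_lt_of_le h2 hx.1))
      have hg : IntegrableOn (fun s => M * (t - s) ^ (β - 1)) (Ioc (t/2) t) := by
        have hr : IntervalIntegrable (fun x : ℝ => x ^ (β - 1)) volume (t/2) 0 :=
          intervalIntegral.intervalIntegrable_rpow' (by linarith)
        have hr2 := hr.comp_sub_left t
        -- hr2 : IntervalIntegrable (fun s => (t - s) ^ (β-1)) volume (t - 0) (t - t/2) symm'd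
        have hr3 := hr2.const_mul M
        rw [sub_zero] at hr3
        have hle : t - t/2 ≤ t := by linarith
        rw [intervalIntegrable_iff_integrableOn_Ioc_of_le hle] at hr3
        have : t - t/2 = t/2 := by ring
        rwa [this] at hr3
      apply Integrable.mono hg
      · exact hmeasF.mono_measure (Measure.restrict_mono (by rw [hsplit]; exact subset_union_right) le_rfl)
      · filter_upwards [ae_restrict_mem measurableSet_Ioc] with s hs
        obtain ⟨hs0, hs1⟩ := hs
        have hts : (0:ℝ) ≤ t - s := by linarith
        have h2' : 0 ≤ (t - s) ^ (β - 1) := Real.rpow_nonneg hts _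
        have hMs : ‖ρ s‖ ≤ M := hM s ⟨hs0.le, hs1⟩
        rw [Real.norm_eq_abs, abs_mul, abs_of_nonneg h2', Real.norm_eq_abs, abs_mul]
        calc (t - s) ^ (β - 1) * |ρ s| ≤ (t - s) ^ (β - 1) * M :=
              mul_le_mul_of_nonneg_left hMs h2'
          _ ≤ |M| * |(t - s) ^ (β - 1)| := by
              rw [abs_of_nonneg h2', mul_comm ((t - s) ^ (β - 1)) M]
              exact mul_le_mul_of_nonneg_right (le_abs_self M) h2'
  -- pointwise identity used for substitution
  have hpt : ∀ t > (0:ℝ), ∀ u ∈ Ioc (0:ℝ) 1,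
      t * ((t - t * u) ^ (β - 1) * ρ (t * u)) =
        ((1 - u) ^ (β - 1) * u ^ (-β)) * ((t * u) ^ β * ρ (t * u)) := by
    intro t ht u hu
    obtain ⟨hu0, hu1⟩ := hu
    have h1u : (0:ℝ) ≤ 1 - u := by linarith
    have e1 : t - t * u = t * (1 - u) := by ring
    rw [e1, Real.mul_rpow ht.le h1u, Real.mul_rpow ht.le hu0.le]
    have e2 : u ^ (-β) * u ^ β = 1 := by
      rw [← Real.rpow_add hu0]; simp
    have e3 : t * t ^ (β - 1) = t ^ β := by
      nth_rewrite 1 [← Real.rpow_one t]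
      rw [← Real.rpow_add ht]; ring_nf
    linear_combination ((1 - u) ^ (β - 1) * ρ (t * u)) * e3 -
      ((1 - u) ^ (β - 1) * ρ (t * u) * t ^ β) * e2
  -- Step 2: change of variables s = t * u
  have key : ∀ t > (0:ℝ), (∫ s in (0:ℝ)..t, (t - s) ^ (β - 1) * ρ s) =
      ∫ u in (0:ℝ)..1, ((1 - u) ^ (β - 1) * u ^ (-β)) * ((t * u) ^ β * ρ (t * u)) := by
    intro t ht
    have h1 := intervalIntegral.smul_integral_comp_mul_left
      (a := 0) (b := 1) (fun s => (t - s) ^ (β - 1) * ρ s) t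
    rw [mul_zero, mul_one] at h1
    rw [← h1, smul_eq_mul, ← intervalIntegral.integral_const_mul]
    rw [intervalIntegral.integral_of_le zero_le_one, intervalIntegral.integral_of_le zero_le_one]
    exact setIntegral_congr_fun measurableSet_Ioc (fun u hu => hpt t ht u hu)
  -- Step 3: integrability of the substituted integrand
  have hInt' : ∀ t > (0:ℝ), IntervalIntegrable
      (fun u => ((1 - u) ^ (β - 1) * u ^ (-β)) * ((t * u) ^ β * ρ (t * u))) volume 0 1 := by
    intro t ht
    have hc := (hInt t ht).comp_mul_left (c := t)
    rw [zero_div, div_self ht.ne'] at hc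
    have hc2 := hc.const_mul t
    rw [intervalIntegrable_iff_integrableOn_Ioc_of_le zero_le_one] at hc2 ⊢
    exact hc2.congr_fun (fun u hu => hpt t ht u hu) measurableSet_Ioc
  -- Step 4: conclude by monotone comparison
  intro t₁ h₁ t₂ h₂ h₁₂
  simp only [mem_Ioi] at h₁ h₂
  show (∫ s in Ioo (0:ℝ) t₂, (t₂ - s) ^ (β - 1) * ρ s) ≤
      ∫ s in Ioo (0:ℝ) t₁, (t₁ - s) ^ (β - 1) * ρ s
  rw [← integral_Ioc_eq_integral_Ioo, ← integral_Ioc_eq_integral_Ioo,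
    ← intervalIntegral.integral_of_le h₁.le, ← intervalIntegral.integral_of_le h₂.le,
    key t₁ h₁, key t₂ h₂]
  apply intervalIntegral.integral_mono_on zero_le_one (hInt' t₂ h₂) (hInt' t₁ h₁)
  intro u hu
  by_cases hu0 : u = 0
  · subst hu0
    simp [Real.zero_rpow (neg_ne_zero.mpr hβ0.ne')]
  · have hu0' : 0 < u := lt_of_le_of_ne hu.1 (Ne.symm hu0)
    have hw : 0 ≤ (1 - u) ^ (β - 1) * u ^ (-β) :=
      mul_nonneg (Real.rpow_nonneg (by linarith [hu.2]) _) (Real.rpow_nonneg hu0'.le _)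
    apply mul_le_mul_of_nonneg_left _ hw
    exact hmono (mem_Ioi.mpr (mul_pos h₁ hu0')) (mem_Ioi.mpr (mul_pos h₂ hu0'))
      (mul_le_mul_of_nonneg_right h₁₂ hu0'.le)
end

section
/- Let 0<β<1 and suppose ρ is continuous on (0,+∞) and Lebesgue integrable on every bounded subinterval of [0,+∞). If the function t↦t^β ρ(t) is nondecreasing on (0,+∞), then the function y(t)=∫₀ᵗ (t-s)^{β-1} ρ(s) ds is nondecreasing on (0,+∞). -/
open MeasureTheory Set Real

/-- Lemma 2.6 (2): if `t^β ρ(t)` is nondecreasing on `(0,∞)`, then the fractional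
integral function `y(t) = ∫₀ᵗ (t-s)^(β-1) ρ(s) ds` is nondecreasing on `(0,∞)`. -/
theorem stmt_3 (β : ℝ) (hβ0 : 0 < β) (hβ1 : β < 1)
    (ρ : ℝ → ℝ) (hρc : ContinuousOn ρ (Ioi 0))
    (hρint : ∀ T > 0, IntegrableOn ρ (Ioc (0:ℝ) T))
    (hmono : MonotoneOn (fun t => t ^ β * ρ t) (Ioi (0:ℝ))) :
    MonotoneOn (fun t => ∫ s in Ioo (0:ℝ) t, (t - s) ^ (β - 1) * ρ s) (Ioi (0:ℝ)) := by
  have hβ1' : β - 1 < 0 := by linarith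
  -- Step I: integrability of the kernel times ρ on (0, t]
  have key_int : ∀ t : ℝ, 0 < t →
      IntegrableOn (fun s => (t - s) ^ (β - 1) * ρ s) (Ioc 0 t) := by
    intro t ht
    have h2 : (0:ℝ) < t / 2 := by linarith
    have hsplit : Ioc (0:ℝ) t = Ioc 0 (t/2) ∪ Ioc (t/2) t :=
      (Ioc_union_Ioc_eq_Ioc h2.le (by linarith)).symm
    rw [hsplit]
    apply IntegrableOn.union
    · -- near 0: kernel is bounded, ρ is integrable
      have hρi := hρint (t/2) h2
      have hkc : ContinuousOn (fun s : ℝ => (t - s) ^ (β - 1)) (Ioc 0 (t/2)) :=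
        ((continuous_const.sub continuous_id).continuousOn).rpow_const
          (fun x hx => Or.inl (show t - x ≠ 0 from (by nlinarith [hx.1, hx.2] : (0:ℝ) < t - x).ne'))
      have hmeas : AEStronglyMeasurable (fun s => (t - s) ^ (β - 1) * ρ s)
          (volume.restrict (Ioc 0 (t/2))) :=
        (hkc.aestronglyMeasurable measurableSet_Ioc).mul hρi.aestronglyMeasurable
      refine Integrable.mono (hρi.const_mul ((t/2) ^ (β-1))) hmeas ?_
      filter_upwards [ae_restrict_mem measurableSet_Ioc] with s hs
      have h1 : t/2 ≤ t - s := by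
        have := hs.2; linarith
      have hk0 : (0:ℝ) ≤ (t - s) ^ (β - 1) := rpow_nonneg (by linarith) _
      have hk1 : (t - s) ^ (β - 1) ≤ (t/2) ^ (β - 1) :=
        rpow_le_rpow_of_nonpos h2 h1 hβ1'.le
      have hk2 : (0:ℝ) ≤ (t/2) ^ (β-1) := rpow_nonneg h2.le _
      simp only [norm_mul, Real.norm_eq_abs, abs_of_nonneg hk0, abs_of_nonneg hk2]
      exact mul_le_mul_of_nonneg_right hk1 (abs_nonneg _)
    · -- near t: ρ is bounded, kernel is integrable
      obtain ⟨C, hC⟩ := (isCompact_Icc (a := t/2) (b := t)).exists_bound_of_continuousOn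
        (hρc.mono (fun x hx => lt_of_lt_of_le h2 hx.1))
      have hker : IntervalIntegrable (fun s => (t - s) ^ (β - 1)) volume (t/2) t := by
        have h := (intervalIntegral.intervalIntegrable_rpow'
          (a := 0) (b := t/2) (r := β-1) (by linarith)).comp_sub_left t
        have ht2 : t - t/2 = t/2 := by ring
        rw [sub_zero, ht2] at h
        exact h.symm
      have hkerI : IntegrableOn (fun s => (t - s) ^ (β - 1)) (Ioc (t/2) t) :=
        (intervalIntegrable_iff_integrableOn_Ioc_of_le (by linarith)).1 hker
      have hρm : AEStronglyMeasurable ρ (volume.restrict (Ioo (t/2) t)) :=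
        ((hρint t ht).mono_set
          (Ioo_subset_Ioc_self.trans (Ioc_subset_Ioc_left h2.le))).aestronglyMeasurable
      have hkc : ContinuousOn (fun s : ℝ => (t - s) ^ (β - 1)) (Ioo (t/2) t) :=
        ((continuous_const.sub continuous_id).continuousOn).rpow_const
          (fun x hx => Or.inl (show t - x ≠ 0 from (by nlinarith [hx.1, hx.2] : (0:ℝ) < t - x).ne'))
      have hmeas : AEStronglyMeasurable (fun s => (t - s) ^ (β - 1) * ρ s)
          (volume.restrict (Ioo (t/2) t)) :=
        (hkc.aestronglyMeasurable measurableSet_Ioo).mul hρm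
      rw [integrableOn_Ioc_iff_integrableOn_Ioo]
      refine Integrable.mono ((hkerI.mono_set Ioo_subset_Ioc_self).mul_const C) hmeas ?_
      filter_upwards [ae_restrict_mem measurableSet_Ioo] with s hs
      have hk0 : (0:ℝ) ≤ (t - s) ^ (β - 1) := rpow_nonneg (by linarith [hs.2]) _
      have hCs : |ρ s| ≤ C := hC s ⟨hs.1.le, hs.2.le⟩
      have hC0 : 0 ≤ C := le_trans (abs_nonneg _) hCs
      simp only [norm_mul, Real.norm_eq_abs, abs_of_nonneg hk0, abs_of_nonneg hC0]
      exact mul_le_mul_of_nonneg_left hCs hk0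
  -- pointwise identity after the substitution s = t * u
  have hpt : ∀ t : ℝ, 0 < t → ∀ u ∈ Ioo (0:ℝ) 1,
      t * ((t - t*u) ^ (β - 1) * ρ (t*u))
        = (1 - u) ^ (β - 1) * u ^ (-β) * ((t*u) ^ β * ρ (t*u)) := by
    intro t ht u hu
    have h1 : t - t*u = t*(1-u) := by ring
    rw [h1, Real.mul_rpow ht.le (by linarith [hu.2]), Real.mul_rpow ht.le hu.1.le]
    have h2 : t * t^(β-1) = t^β := by
      have h := Real.rpow_add ht 1 (β-1)
      rw [Real.rpow_one] at h
      rw [← h]; norm_num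
    have h3 : u^(-β) * u^β = 1 := by
      rw [← Real.rpow_add hu.1]; simp
    linear_combination ((1-u) ^ (β-1) * ρ (t*u)) * h2
      - ((1-u) ^ (β-1) * t^β * ρ (t*u)) * h3
  -- Step II: integrability of the new integrand on (0,1)
  have key_int2 : ∀ t : ℝ, 0 < t →
      IntegrableOn (fun u => (1 - u) ^ (β - 1) * u ^ (-β) * ((t*u) ^ β * ρ (t*u)))
        (Ioo (0:ℝ) 1) := by
    intro t ht
    have h1 : IntervalIntegrable (fun s => (t - s)^(β-1) * ρ s) volume 0 t :=
      (intervalIntegrable_iff_integrableOn_Ioc_of_le ht.le).2 (key_int t ht)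
    have h2 := h1.comp_mul_left (c := t)
    rw [zero_div, div_self ht.ne'] at h2
    have h3 : IntegrableOn (fun u => t * ((t - t*u)^(β-1) * ρ (t*u))) (Ioo (0:ℝ) 1) :=
      (((intervalIntegrable_iff_integrableOn_Ioc_of_le zero_le_one).1 h2).mono_set
        Ioo_subset_Ioc_self).const_mul t
    exact h3.congr_fun (fun u hu => hpt t ht u hu) measurableSet_Ioo
  -- Step III: representation via substitution
  have key_rep : ∀ t : ℝ, 0 < t →
      (∫ s in Ioo (0:ℝ) t, (t - s) ^ (β - 1) * ρ s)
        = ∫ u in Ioo (0:ℝ) 1, (1 - u) ^ (β - 1) * u ^ (-β) * ((t*u) ^ β * ρ (t*u)) := by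
    intro t ht
    have e1 : (∫ s in Ioo (0:ℝ) t, (t - s) ^ (β - 1) * ρ s)
        = ∫ s in (0:ℝ)..t, (t - s) ^ (β - 1) * ρ s := by
      rw [intervalIntegral.integral_of_le ht.le, integral_Ioc_eq_integral_Ioo]
    have e2 : (∫ s in (0:ℝ)..t, (t - s) ^ (β - 1) * ρ s)
        = t • ∫ u in (0:ℝ)..1, (t - t*u) ^ (β - 1) * ρ (t*u) := by
      rw [intervalIntegral.smul_integral_comp_mul_left
        (fun s => (t - s) ^ (β - 1) * ρ s) t]
      norm_num
    have e3 : t • (∫ u in (0:ℝ)..1, (t - t*u) ^ (β - 1) * ρ (t*u))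
        = ∫ u in (0:ℝ)..1, t * ((t - t*u) ^ (β - 1) * ρ (t*u)) := by
      rw [← intervalIntegral.integral_smul]
      simp [smul_eq_mul]
    have e4 : (∫ u in (0:ℝ)..1, t * ((t - t*u) ^ (β - 1) * ρ (t*u)))
        = ∫ u in Ioo (0:ℝ) 1, t * ((t - t*u) ^ (β - 1) * ρ (t*u)) := by
      rw [intervalIntegral.integral_of_le zero_le_one, integral_Ioc_eq_integral_Ioo]
    rw [e1, e2, e3, e4]
    exact setIntegral_congr_fun measurableSet_Ioo (fun u hu => hpt t ht u hu)
  -- conclusion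
  intro a ha b hb hab
  simp only
  rw [key_rep a ha, key_rep b hb]
  refine setIntegral_mono_on (key_int2 a ha) (key_int2 b hb) measurableSet_Ioo ?_
  intro u hu
  have h0 : 0 ≤ (1-u)^(β-1) * u^(-β) :=
    mul_nonneg (rpow_nonneg (by linarith [hu.2]) _) (rpow_nonneg hu.1.le _)
  refine mul_le_mul_of_nonneg_left ?_ h0
  exact hmono (mem_Ioi.2 (mul_pos ha hu.1)) (mem_Ioi.2 (mul_pos hb hu.1))
    (mul_le_mul_of_nonneg_right hab hu.1.le)
end

section
/- Let 0<β<1 and suppose ρ is continuous on (0,+∞) and Lebesgue integrable on every bounded subinterval of [0,+∞). If lim_{t→+∞} t^β ρ(t) = 0, then lim_{t→+∞} ∫₀ᵗ (t-s)^{β-1} ρ(s) ds = 0. -/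
open MeasureTheory Set Filter


lemma aux_beta (β : ℝ) (hβ0 : 0 < β) (hβ1 : β < 1) :
    IntegrableOn (fun u : ℝ => (1-u)^(β-1) * u^(-β)) (Ioc (0:ℝ) 1) := by
  have h1 : (0:ℝ) < (1 - (β:ℂ)).re := by simp [hβ1]
  have h2 : (0:ℝ) < (β:ℂ).re := by simpa using hβ0
  have hc := (Complex.betaIntegral_convergent h1 h2).norm
  have hint : IntegrableOn
      (fun x : ℝ => ‖(x : ℂ) ^ ((1 - (β:ℂ)) - 1) * (1 - (x : ℂ)) ^ ((β:ℂ) - 1)‖)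
      (Ioc (0:ℝ) 1) := by
    rw [← intervalIntegrable_iff_integrableOn_Ioc_of_le zero_le_one]
    exact hc
  refine hint.congr_fun ?_ measurableSet_Ioc
  intro x hx
  have hx0 : (0:ℝ) < x := hx.1
  have hx1 : (0:ℝ) ≤ 1 - x := by linarith [hx.2]
  have hre1 : ((1 - (β:ℂ)) - 1).re = -β := by simp
  have hre2 : ((β:ℂ) - 1).re = β - 1 := by simp
  show ‖_ * _‖ = _
  rw [norm_mul,
    Complex.norm_cpow_eq_rpow_re_of_pos hx0,
    show ((1:ℂ) - (x:ℂ)) = ((1 - x : ℝ) : ℂ) by push_cast; ring,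
    Complex.norm_cpow_eq_rpow_re_of_nonneg hx1 (by rw [hre2]; linarith),
    hre1, hre2, mul_comm]


lemma aux_scale (β : ℝ) (hβ0 : 0 < β) (hβ1 : β < 1)
    (hbeta : IntegrableOn (fun u : ℝ => (1-u)^(β-1) * u^(-β)) (Ioc (0:ℝ) 1))
    (t : ℝ) (ht : 0 < t) :
    IntegrableOn (fun s : ℝ => (t-s)^(β-1) * s^(-β)) (Ioc (0:ℝ) t) ∧
    ∫ s in Ioc (0:ℝ) t, (t-s)^(β-1) * s^(-β) = ∫ u in Ioc (0:ℝ) 1, (1-u)^(β-1) * u^(-β) := by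
  set f : ℝ → ℝ := fun u => (1-u)^(β-1) * u^(-β) with hf
  have hβn : -β ≠ 0 := by linarith
  have key : ∀ s ∈ uIcc (0:ℝ) t, f (t⁻¹ * s) = t * ((t-s)^(β-1) * s^(-β)) := by
    intro s hs
    rw [uIcc_of_le ht.le] at hs
    rcases eq_or_lt_of_le hs.1 with h0 | h0
    · rw [← h0]
      simp [hf, Real.zero_rpow hβn]
    · have hst : 0 ≤ t - s := by linarith [hs.2]
      have h1 : 1 - s / t = (t - s) / t := by field_simp
      have h2 : t⁻¹ * s = s / t := by ring
      rw [hf]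
      simp only [h2, h1]
      rw [Real.div_rpow hst ht.le, Real.div_rpow h0.le ht.le]
      rw [div_mul_div_comm, ← Real.rpow_add ht]
      have : β - 1 + -β = -1 := by ring
      rw [this, Real.rpow_neg_one]
      field_simp
  have hf_ii : IntervalIntegrable f volume 0 1 :=
    (intervalIntegrable_iff_integrableOn_Ioc_of_le zero_le_one).mpr hbeta
  have comp := hf_ii.comp_mul_left (c := t⁻¹)
  rw [zero_div, one_div, inv_inv] at comp
  have hginteg : IntegrableOn (fun s : ℝ => (t-s)^(β-1) * s^(-β)) (Ioc (0:ℝ) t) := by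
    have h1 : IntegrableOn (fun s : ℝ => t⁻¹ * f (t⁻¹ * s)) (Ioc (0:ℝ) t) := by
      have := (intervalIntegrable_iff_integrableOn_Ioc_of_le ht.le).mp comp
      exact this.const_mul t⁻¹
    refine h1.congr_fun ?_ measurableSet_Ioc
    intro s hs
    have hk := key s (by rw [uIcc_of_le ht.le]; exact ⟨hs.1.le, hs.2⟩)
    simp only [hk]
    field_simp
  refine ⟨hginteg, ?_⟩
  have hval := intervalIntegral.integral_comp_mul_left f (inv_ne_zero ht.ne') (a := 0) (b := t)
  rw [mul_zero, inv_mul_cancel₀ ht.ne', inv_inv] at hval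
  have hcongr : ∫ s in (0:ℝ)..t, f (t⁻¹ * s) = ∫ s in (0:ℝ)..t, t * ((t-s)^(β-1) * s^(-β)) :=
    intervalIntegral.integral_congr key
  rw [hcongr, intervalIntegral.integral_const_mul] at hval
  have hval2 : ∫ s in (0:ℝ)..t, (t-s)^(β-1) * s^(-β) = ∫ u in (0:ℝ)..1, f u := by
    have := hval
    rw [smul_eq_mul] at this
    exact mul_left_cancel₀ ht.ne' this
  rw [intervalIntegral.integral_of_le ht.le, intervalIntegral.integral_of_le zero_le_one] at hval2
  exact hval2

/-- Lemma 2.7: if `t^β ρ(t) → 0` as `t → ∞`, then `∫₀ᵗ (t-s)^(β-1) ρ(s) ds → 0`. -/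
theorem stmt_4 (β : ℝ) (hβ0 : 0 < β) (hβ1 : β < 1)
    (ρ : ℝ → ℝ) (hρc : ContinuousOn ρ (Ioi 0))
    (hρint : ∀ T > 0, IntegrableOn ρ (Ioc (0:ℝ) T))
    (hlim : Tendsto (fun t => t ^ β * ρ t) atTop (nhds 0)) :
    Tendsto (fun t => ∫ s in Ioo (0:ℝ) t, (t - s) ^ (β - 1) * ρ s) atTop (nhds 0) := by
  have hbeta := aux_beta β hβ0 hβ1
  set C : ℝ := ∫ u in Ioc (0:ℝ) 1, (1-u)^(β-1) * u^(-β) with hCdef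
  have hC0 : 0 ≤ C := by
    apply setIntegral_nonneg measurableSet_Ioc
    intro u hu
    exact mul_nonneg (Real.rpow_nonneg (by linarith [hu.2]) _) (Real.rpow_nonneg hu.1.le _)
  rw [NormedAddCommGroup.tendsto_nhds_zero]
  intro ε hε
  set ε' : ℝ := ε / (2 * (C + 1)) with hε'def
  have hε' : 0 < ε' := by positivity
  have hev := NormedAddCommGroup.tendsto_nhds_zero.mp hlim ε' hε'
  obtain ⟨M₀, hM₀⟩ := eventually_atTop.mp hev
  set M : ℝ := max M₀ 1 with hMdef
  have hM1 : (1:ℝ) ≤ M := le_max_right _ _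
  have hM0 : (0:ℝ) < M := lt_of_lt_of_le one_pos hM1
  have hMs : ∀ s : ℝ, M ≤ s → |ρ s| ≤ ε' * s ^ (-β) := by
    intro s hs
    have hs0 : (0:ℝ) < s := lt_of_lt_of_le hM0 hs
    have h1 : ‖s ^ β * ρ s‖ < ε' := hM₀ s (le_trans (le_max_left _ _) hs)
    have h2 : s ^ β * |ρ s| < ε' := by
      rwa [Real.norm_eq_abs, abs_mul, abs_of_nonneg (Real.rpow_nonneg hs0.le _)] at h1
    have hpow : (0:ℝ) < s ^ β := Real.rpow_pos_of_pos hs0 _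
    rw [Real.rpow_neg hs0.le, mul_comm, inv_mul_eq_div, le_div_iff₀ hpow]
    nlinarith [h2]
  set A : ℝ := ∫ s in Ioc (0:ℝ) M, |ρ s| with hAdef
  have hA0 : 0 ≤ A := by
    apply setIntegral_nonneg measurableSet_Ioc
    intro s _; exact abs_nonneg _
  have htend : Tendsto (fun t : ℝ => (t - M) ^ (β - 1) * A) atTop (nhds 0) := by
    have h2 : Tendsto (fun t : ℝ => t - M) atTop atTop :=
      tendsto_atTop_add_const_right atTop (-M) tendsto_id
    have h3 := (tendsto_rpow_neg_atTop (by linarith : (0:ℝ) < 1 - β)).comp h2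
    have h4 : Tendsto (fun t : ℝ => (t - M) ^ (β - 1)) atTop (nhds 0) := by
      have : (fun t : ℝ => (t - M) ^ (β - 1)) =
          (fun x : ℝ => x ^ (-(1 - β))) ∘ (fun t : ℝ => t - M) := by
        funext x; simp only [Function.comp]; congr 1; ring
      rw [this]; exact h3
    simpa using h4.mul_const A
  have hev2 : ∀ᶠ t in atTop, (t - M) ^ (β - 1) * A < ε / 2 :=
    htend.eventually_lt_const (by linarith)
  filter_upwards [hev2, eventually_gt_atTop M] with t hsmall htM
  have ht0 : (0:ℝ) < t := hM0.trans htM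
  obtain ⟨hginteg, hgval⟩ := aux_scale β hβ0 hβ1 hbeta t ht0
  have hρm : AEStronglyMeasurable ρ (volume.restrict (Ioo (0:ℝ) M)) :=
    ((hρint M hM0).aestronglyMeasurable).mono_measure
      (Measure.restrict_mono Ioo_subset_Ioc_self le_rfl)
  have hpowm : Measurable fun s : ℝ => (t - s) ^ (β - 1) := by fun_prop
  have hbd1 : ∀ s ∈ Ioo (0:ℝ) M, ‖(t - s) ^ (β - 1) * ρ s‖ ≤ (t - M) ^ (β - 1) * |ρ s| := by
    intro s hs
    have h1 : (0:ℝ) < t - M := by linarith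
    have h2 : t - M ≤ t - s := by linarith [hs.2]
    rw [Real.norm_eq_abs, abs_mul, abs_of_nonneg (Real.rpow_nonneg (by linarith : (0:ℝ) ≤ t - s) _)]
    exact mul_le_mul_of_nonneg_right
      (Real.rpow_le_rpow_of_nonpos h1 h2 (by linarith)) (abs_nonneg _)
  have hdom1 : IntegrableOn (fun s : ℝ => (t - M) ^ (β - 1) * |ρ s|) (Ioo (0:ℝ) M) := by
    have h := ((hρint M hM0).abs).const_mul ((t - M) ^ (β - 1))
    exact IntegrableOn.mono_set h Ioo_subset_Ioc_self
  have int1 : IntegrableOn (fun s : ℝ => (t - s) ^ (β - 1) * ρ s) (Ioo (0:ℝ) M) := by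
    refine Integrable.mono' hdom1 (hpowm.aestronglyMeasurable.mul hρm) ?_
    rw [ae_restrict_iff' measurableSet_Ioo]
    filter_upwards with s hs
    exact hbd1 s hs
  have hsub2 : Ico M t ⊆ Ioc (0:ℝ) t := fun s hs => ⟨hM0.trans_le hs.1, hs.2.le⟩
  have hbd2 : ∀ s ∈ Ico M t, ‖(t - s) ^ (β - 1) * ρ s‖ ≤
      ε' * ((t - s) ^ (β - 1) * s ^ (-β)) := by
    intro s hs
    have hs0 : (0:ℝ) < s := hM0.trans_le hs.1
    have hts : (0:ℝ) ≤ t - s := by linarith [hs.2]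
    rw [Real.norm_eq_abs, abs_mul, abs_of_nonneg (Real.rpow_nonneg hts _)]
    calc (t - s) ^ (β - 1) * |ρ s| ≤ (t - s) ^ (β - 1) * (ε' * s ^ (-β)) :=
          mul_le_mul_of_nonneg_left (hMs s hs.1) (Real.rpow_nonneg hts _)
      _ = ε' * ((t - s) ^ (β - 1) * s ^ (-β)) := by ring
  have hdom2 : IntegrableOn (fun s : ℝ => ε' * ((t - s) ^ (β - 1) * s ^ (-β))) (Ico M t) := by
    have h := hginteg.const_mul ε'
    exact IntegrableOn.mono_set h hsub2
  have hρm2 : AEStronglyMeasurable ρ (volume.restrict (Ico M t)) :=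
    (hρc.mono (fun s hs => hM0.trans_le hs.1)).aestronglyMeasurable measurableSet_Ico
  have int2 : IntegrableOn (fun s : ℝ => (t - s) ^ (β - 1) * ρ s) (Ico M t) := by
    refine Integrable.mono' hdom2 (hpowm.aestronglyMeasurable.mul hρm2) ?_
    rw [ae_restrict_iff' measurableSet_Ico]
    filter_upwards with s hs
    exact hbd2 s hs
  have hdisj : Disjoint (Ioo (0:ℝ) M) (Ico M t) := by
    apply Set.disjoint_left.mpr
    intro s hs1 hs2
    exact absurd hs2.1 (not_le.mpr hs1.2)
  have hsplit : Ioo (0:ℝ) t = Ioo 0 M ∪ Ico M t := (Ioo_union_Ico_eq_Ioo hM0 htM.le).symm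
  rw [hsplit, setIntegral_union hdisj measurableSet_Ico int1 int2]
  have part1 : ‖∫ s in Ioo (0:ℝ) M, (t - s) ^ (β - 1) * ρ s‖ ≤ (t - M) ^ (β - 1) * A := by
    refine (norm_integral_le_integral_norm _).trans ?_
    have h1 : ∫ s in Ioo (0:ℝ) M, ‖(t - s) ^ (β - 1) * ρ s‖ ≤
        ∫ s in Ioo (0:ℝ) M, (t - M) ^ (β - 1) * |ρ s| :=
      setIntegral_mono_on int1.norm hdom1 measurableSet_Ioo hbd1
    refine h1.trans ?_
    rw [integral_const_mul, hAdef, integral_Ioc_eq_integral_Ioo]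
  have part2 : ‖∫ s in Ico M t, (t - s) ^ (β - 1) * ρ s‖ ≤ ε' * C := by
    refine (norm_integral_le_integral_norm _).trans ?_
    have h1 : ∫ s in Ico M t, ‖(t - s) ^ (β - 1) * ρ s‖ ≤
        ∫ s in Ico M t, ε' * ((t - s) ^ (β - 1) * s ^ (-β)) :=
      setIntegral_mono_on int2.norm hdom2 measurableSet_Ico hbd2
    have h2 : ∫ s in Ico M t, ε' * ((t - s) ^ (β - 1) * s ^ (-β)) ≤
        ∫ s in Ioc (0:ℝ) t, ε' * ((t - s) ^ (β - 1) * s ^ (-β)) := by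
      refine setIntegral_mono_set (hginteg.const_mul ε') ?_ (HasSubset.Subset.eventuallyLE hsub2)
      filter_upwards [ae_restrict_mem measurableSet_Ioc] with s hs
      exact mul_nonneg hε'.le (mul_nonneg
        (Real.rpow_nonneg (by linarith [hs.2] : (0:ℝ) ≤ t - s) _) (Real.rpow_nonneg hs.1.le _))
    refine (h1.trans h2).trans ?_
    rw [integral_const_mul, hgval]
  have hfin : ε' * C ≤ ε / 2 := by
    rw [hε'def, div_mul_eq_mul_div, div_le_iff₀ (by positivity)]
    nlinarith
  calc ‖(∫ s in Ioo (0:ℝ) M, (t - s) ^ (β - 1) * ρ s) +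
        ∫ s in Ico M t, (t - s) ^ (β - 1) * ρ s‖
      ≤ ‖∫ s in Ioo (0:ℝ) M, (t - s) ^ (β - 1) * ρ s‖ +
        ‖∫ s in Ico M t, (t - s) ^ (β - 1) * ρ s‖ := norm_add_le _ _
    _ ≤ (t - M) ^ (β - 1) * A + ε' * C := add_le_add part1 part2
    _ < ε / 2 + ε / 2 := by linarith
    _ = ε := by ring
end

section
/- Let 0<β<1, let a∈ℝ, and suppose ρ is continuous on (0,+∞) and Lebesgue integrable on every bounded subinterval of [0,+∞). If lim_{t→+∞} t^β ρ(t) = a, then lim_{t→+∞} ∫₀ᵗ (t-s)^{β-1} ρ(s) ds = aπ/sin(βπ). -/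
open MeasureTheory Set Filter

lemma betaReal (β : ℝ) (hβ0 : 0 < β) (hβ1 : β < 1) :
    ∫ v in (0:ℝ)..1, (1-v)^(β-1) * v^(-β) = Real.pi / Real.sin (β * Real.pi) := by
  have h := Complex.Gamma_mul_Gamma_eq_betaIntegral (s := (1:ℂ)-β) (t := (β:ℂ))
    (by simp; linarith) (by simp [hβ0])
  have h1 : (1:ℂ) - β + β = 1 := by ring
  rw [h1, Complex.Gamma_one, one_mul] at h
  have e1 : Complex.betaIntegral ((1:ℂ)-β) β
      = ((∫ v in (0:ℝ)..1, (1-v)^(β-1) * v^(-β) : ℝ) : ℂ) := by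
    rw [Complex.betaIntegral, ← intervalIntegral.integral_ofReal]
    apply intervalIntegral.integral_congr
    intro x hx
    rw [uIcc_of_le zero_le_one] at hx
    simp only []
    have h2 : ((1:ℂ) - β) - 1 = ((-β : ℝ) : ℂ) := by push_cast; ring
    have h3 : ((β:ℂ) - 1) = ((β - 1 : ℝ) : ℂ) := by push_cast; ring
    rw [h2, h3, ← Complex.ofReal_cpow hx.1, ← Complex.ofReal_one, ← Complex.ofReal_sub,
      ← Complex.ofReal_cpow (by linarith [hx.2]), ← Complex.ofReal_mul]
    norm_num [mul_comm]
  rw [e1] at h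
  have h4 : ((1:ℂ) - β) = ((1 - β : ℝ) : ℂ) := by push_cast; ring
  rw [h4, Complex.Gamma_ofReal, Complex.Gamma_ofReal, ← Complex.ofReal_mul] at h
  have h5 := Complex.ofReal_injective h
  rw [← h5, mul_comm (Real.Gamma (1-β)), Real.Gamma_mul_Gamma_one_sub, mul_comm β]


lemma kernelInt (β : ℝ) (hβ0 : 0 < β) (hβ1 : β < 1) {t : ℝ} (ht : 0 < t) :
    IntegrableOn (fun s => (t-s)^(β-1) * s^(-β)) (Ioo 0 t) := by
  have ht2 : (0:ℝ) < t/2 := by linarith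
  have hsub : Ioo (0:ℝ) t ⊆ Ioc 0 (t/2) ∪ Ioo (t/2) t := by
    intro x hx
    rcases le_or_gt x (t/2) with h | h
    · exact Or.inl ⟨hx.1, h⟩
    · exact Or.inr ⟨h, hx.2⟩
  have part1 : IntegrableOn (fun s => (t-s)^(β-1) * s^(-β)) (Ioc 0 (t/2)) := by
    have hint : IntegrableOn (fun s : ℝ => (t/2)^(β-1) * s^(-β)) (Ioc 0 (t/2)) := by
      have := intervalIntegral.intervalIntegrable_rpow' (r := -β) (by linarith) (a := (0:ℝ)) (b := t/2)
      rw [intervalIntegrable_iff, uIoc_of_le ht2.le] at this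
      exact this.const_mul _
    apply Integrable.mono hint
    · apply ContinuousOn.aestronglyMeasurable _ measurableSet_Ioc
      apply ContinuousOn.mul
      · apply ContinuousOn.rpow_const (Continuous.continuousOn (by fun_prop))
        intro x hx
        left
        have : x < t := lt_of_le_of_lt hx.2 (by linarith)
        exact sub_ne_zero_of_ne (ne_of_gt this)
      · apply ContinuousOn.rpow_const continuousOn_id
        intro x hx; left; exact ne_of_gt hx.1
    · filter_upwards [ae_restrict_mem measurableSet_Ioc] with s hs
      have h1 : (0:ℝ) < t - s := by have := hs.2; linarith
      have h2 : (t-s)^(β-1) ≤ (t/2)^(β-1) :=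
        Real.rpow_le_rpow_of_nonpos ht2 (by linarith [hs.2]) (by linarith)
      rw [norm_mul, norm_mul, Real.norm_eq_abs, Real.norm_eq_abs, Real.norm_eq_abs,
        abs_of_nonneg (Real.rpow_nonneg h1.le _), abs_of_nonneg (Real.rpow_nonneg ht2.le _),
        abs_of_nonneg (Real.rpow_nonneg hs.1.le _)]
      exact mul_le_mul_of_nonneg_right h2 (Real.rpow_nonneg hs.1.le _)
  have part2 : IntegrableOn (fun s => (t-s)^(β-1) * s^(-β)) (Ioo (t/2) t) := by
    have hint : IntegrableOn (fun s : ℝ => (t-s)^(β-1) * (t/2)^(-β)) (Ioo (t/2) t) := by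
      have h := (intervalIntegral.intervalIntegrable_rpow' (r := β-1) (by linarith) (a := (0:ℝ))
        (b := t/2)).comp_sub_left t
      rw [intervalIntegrable_iff] at h
      have he : t - t/2 = t/2 := by ring
      rw [sub_zero, he, uIoc_comm, uIoc_of_le (by linarith : t/2 ≤ t)] at h
      exact ((h.mono_set Ioo_subset_Ioc_self).mul_const _)
    apply Integrable.mono hint
    · apply ContinuousOn.aestronglyMeasurable _ measurableSet_Ioo
      apply ContinuousOn.mul
      · apply ContinuousOn.rpow_const (Continuous.continuousOn (by fun_prop))
        intro x hx; left; exact sub_ne_zero_of_ne (ne_of_gt hx.2)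
      · apply ContinuousOn.rpow_const continuousOn_id
        intro x hx; left; have : (0:ℝ) < x := lt_trans ht2 hx.1; exact ne_of_gt this
    · filter_upwards [ae_restrict_mem measurableSet_Ioo] with s hs
      have h0 : (0:ℝ) < s := lt_trans ht2 hs.1
      have h1 : (0:ℝ) < t - s := by have := hs.2; linarith
      have h2 : s^(-β) ≤ (t/2)^(-β) :=
        Real.rpow_le_rpow_of_nonpos ht2 hs.1.le (by linarith)
      rw [norm_mul, norm_mul, Real.norm_eq_abs, Real.norm_eq_abs, Real.norm_eq_abs,
        abs_of_nonneg (Real.rpow_nonneg h1.le _), abs_of_nonneg (Real.rpow_nonneg ht2.le _),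
        abs_of_nonneg (Real.rpow_nonneg h0.le _)]
      exact mul_le_mul_of_nonneg_left h2 (Real.rpow_nonneg h1.le _)
  exact (part1.union part2).mono_set hsub

lemma kernelScale (β : ℝ) (hβ0 : 0 < β) (hβ1 : β < 1) {t : ℝ} (ht : 0 < t) :
    ∫ s in (0:ℝ)..t, (t-s)^(β-1) * s^(-β) = ∫ v in (0:ℝ)..1, (1-v)^(β-1) * v^(-β) := by
  have h := intervalIntegral.integral_comp_mul_right
    (f := fun s => (t-s)^(β-1) * s^(-β)) (a := (0:ℝ)) (b := 1) (ne_of_gt ht)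
  rw [zero_mul, one_mul] at h
  have h2 : ∀ v ∈ uIcc (0:ℝ) 1, (t - v*t)^(β-1) * (v*t)^(-β) = t⁻¹ * ((1-v)^(β-1) * v^(-β)) := by
    intro v hv
    rw [uIcc_of_le zero_le_one] at hv
    have hv0 : 0 ≤ v := hv.1
    have hv1 : 0 ≤ 1 - v := by linarith [hv.2]
    have e1 : t - v*t = (1-v)*t := by ring
    rw [e1, Real.mul_rpow hv1 ht.le, Real.mul_rpow hv0 ht.le]
    have : t^(β-1) * t^(-β) = t⁻¹ := by
      rw [← Real.rpow_add ht, ← Real.rpow_neg_one t]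
      congr 1
      ring
    calc (1-v)^(β-1) * t^(β-1) * (v^(-β) * t^(-β))
        = (t^(β-1) * t^(-β)) * ((1-v)^(β-1) * v^(-β)) := by ring
      _ = t⁻¹ * ((1-v)^(β-1) * v^(-β)) := by rw [this]
  rw [intervalIntegral.integral_congr h2, intervalIntegral.integral_const_mul] at h
  have := congrArg (fun x => t * x) h
  simp only [smul_eq_mul] at this
  rw [← mul_assoc, ← mul_assoc, mul_inv_cancel₀ (ne_of_gt ht), one_mul, one_mul] at this
  exact this.symm

/-- Lemma 2.8: if `t^β ρ(t) → a` as `t → ∞`, then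
`∫₀ᵗ (t-s)^(β-1) ρ(s) ds → aπ / sin(βπ)`. -/
theorem stmt_5 (β a : ℝ) (hβ0 : 0 < β) (hβ1 : β < 1)
    (ρ : ℝ → ℝ) (hρc : ContinuousOn ρ (Ioi 0))
    (hρint : ∀ T > 0, IntegrableOn ρ (Ioc (0:ℝ) T))
    (hlim : Tendsto (fun t => t ^ β * ρ t) atTop (nhds a)) :
    Tendsto (fun t => ∫ s in Ioo (0:ℝ) t, (t - s) ^ (β - 1) * ρ s) atTop
      (nhds (a * Real.pi / Real.sin (β * Real.pi))) := by
  set B := Real.pi / Real.sin (β * Real.pi) with hBdef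
  have hBeq : ∫ v in (0:ℝ)..1, (1-v)^(β-1) * v^(-β) = B := betaReal β hβ0 hβ1
  have hsin : 0 < Real.sin (β * Real.pi) :=
    Real.sin_pos_of_pos_of_lt_pi (by positivity) (by nlinarith [Real.pi_pos])
  have hBpos : 0 < B := div_pos Real.pi_pos hsin
  have hgoal : a * Real.pi / Real.sin (β * Real.pi) = a * B := by
    rw [hBdef]; ring
  rw [hgoal, Metric.tendsto_atTop]
  intro ε hε
  have hε' : 0 < ε / (2*B) := by positivity
  obtain ⟨T₀', hT₀'⟩ := (Metric.tendsto_atTop.mp hlim) (ε/(2*B)) hε'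
  set T₀ := max T₀' 1 with hT₀def
  have hT₀1 : (1:ℝ) ≤ T₀ := le_max_right _ _
  have hT₀0 : (0:ℝ) < T₀ := lt_of_lt_of_le one_pos hT₀1
  have hg : ∀ s, T₀ ≤ s → |s^β * ρ s - a| ≤ ε/(2*B) := by
    intro s hs
    have := hT₀' s (le_trans (le_max_left _ _) hs)
    rw [Real.dist_eq] at this
    exact this.le
  set C₁ := ∫ s in Ioc (0:ℝ) T₀, |ρ s| with hC₁def
  set C₂ := ∫ s in Ioc (0:ℝ) T₀, s^(-β) with hC₂def
  have hC₁0 : 0 ≤ C₁ := setIntegral_nonneg measurableSet_Ioc (fun x _ => abs_nonneg _)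
  have hC₂0 : 0 ≤ C₂ :=
    setIntegral_nonneg measurableSet_Ioc (fun x hx => Real.rpow_nonneg hx.1.le _)
  have hρT₀ := hρint T₀ hT₀0
  have hC₂int : IntegrableOn (fun s : ℝ => s^(-β)) (Ioc 0 T₀) := by
    have := intervalIntegral.intervalIntegrable_rpow' (r := -β) (by linarith)
      (a := (0:ℝ)) (b := T₀)
    rwa [intervalIntegrable_iff, uIoc_of_le hT₀0.le] at this
  have htail : Tendsto (fun t : ℝ => (t - T₀)^(β-1) * (C₁ + |a| * C₂)) atTop (nhds 0) := by
    have h1 : Tendsto (fun t : ℝ => (t - T₀)^(β-1)) atTop (nhds 0) := by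
      have h2 := (tendsto_rpow_neg_atTop (y := 1-β) (by linarith)).comp
        (tendsto_atTop_add_const_right atTop (-T₀) tendsto_id)
      have h3 : (fun t : ℝ => (t - T₀)^(β-1))
          = (fun x : ℝ => x^(-(1-β))) ∘ (fun t : ℝ => t + -T₀) := by
        funext x
        simp only [Function.comp]
        rw [← sub_eq_add_neg]
        congr 1
        ring
      rwa [h3]
    have := h1.mul_const (C₁ + |a| * C₂)
    rwa [zero_mul] at this
  have hev : ∀ᶠ t in atTop, dist (∫ s in Ioo (0:ℝ) t, (t - s) ^ (β - 1) * ρ s) (a * B) < ε := by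
    filter_upwards [htail.eventually_lt_const (by linarith : (0:ℝ) < ε/2),
      eventually_ge_atTop (T₀ + 1)] with t htb ht1
    have htT : T₀ < t := by linarith
    have ht0 : (0:ℝ) < t := lt_trans hT₀0 htT
    have htT0 : (0:ℝ) < t - T₀ := by linarith
    set K : ℝ → ℝ := fun s => (t-s)^(β-1) * ρ s with hKdef
    set P : ℝ → ℝ := fun s => (t-s)^(β-1) * s^(-β) with hPdef
    have hPint : IntegrableOn P (Ioo 0 t) := kernelInt β hβ0 hβ1 ht0
    have hPB : ∫ s in Ioo (0:ℝ) t, P s = B := by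
      have h := kernelScale β hβ0 hβ1 ht0
      rw [intervalIntegral.integral_of_le ht0.le,
        MeasureTheory.integral_Ioc_eq_integral_Ioo] at h
      rw [hPdef]
      rw [h, hBeq]
    have hsub1 : Ioc (0:ℝ) T₀ ⊆ Ioo 0 t := fun x hx => ⟨hx.1, lt_of_le_of_lt hx.2 htT⟩
    have hsub2 : Ioo T₀ t ⊆ Ioo (0:ℝ) t := fun x hx => ⟨lt_trans hT₀0 hx.1, hx.2⟩
    have hun : Ioc (0:ℝ) T₀ ∪ Ioo T₀ t = Ioo 0 t := Ioc_union_Ioo_eq_Ioo hT₀0.le htT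
    have hdis : Disjoint (Ioc (0:ℝ) T₀) (Ioo T₀ t) := by
      rw [Set.disjoint_left]
      rintro x hx1 hx2
      exact absurd hx1.2 (not_le.mpr hx2.1)
    -- integrability of K on the two pieces
    have hK1 : IntegrableOn K (Ioc 0 T₀) := by
      apply Integrable.mono (hρT₀.const_mul ((t-T₀)^(β-1)))
      · apply ContinuousOn.aestronglyMeasurable _ measurableSet_Ioc
        apply ContinuousOn.mul
        · apply ContinuousOn.rpow_const (Continuous.continuousOn (by fun_prop))
          intro x hx
          left
          have : x < t := lt_of_le_of_lt hx.2 htT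
          exact sub_ne_zero_of_ne (ne_of_gt this)
        · exact hρc.mono (fun x hx => hx.1)
      · filter_upwards [ae_restrict_mem measurableSet_Ioc] with s hs
        have h1 : (0:ℝ) < t - s := by have := lt_of_le_of_lt hs.2 htT; linarith
        have h2 : (t-s)^(β-1) ≤ (t-T₀)^(β-1) :=
          Real.rpow_le_rpow_of_nonpos htT0 (by linarith [hs.2]) (by linarith)
        rw [hKdef]
        simp only [norm_mul, Real.norm_eq_abs]
        rw [abs_of_nonneg (Real.rpow_nonneg h1.le _),
          abs_of_nonneg (Real.rpow_nonneg htT0.le _)]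
        exact mul_le_mul_of_nonneg_right h2 (abs_nonneg _)
    have hK2 : IntegrableOn K (Ioo T₀ t) := by
      obtain ⟨M, hM⟩ := (isCompact_Icc (a := T₀) (b := t)).exists_bound_of_continuousOn
        (hρc.mono (fun x hx => lt_of_lt_of_le hT₀0 hx.1))
      set M' := max M 0 with hM'def
      have hbint : IntegrableOn (fun s : ℝ => (t-s)^(β-1) * M') (Ioo T₀ t) := by
        have h := (intervalIntegral.intervalIntegrable_rpow' (r := β-1) (by linarith)
          (a := (0:ℝ)) (b := t - T₀)).comp_sub_left t
        rw [intervalIntegrable_iff] at h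
        have he : t - (t - T₀) = T₀ := by ring
        rw [sub_zero, he, uIoc_comm, uIoc_of_le htT.le] at h
        exact (h.mono_set Ioo_subset_Ioc_self).mul_const _
      apply Integrable.mono hbint
      · apply ContinuousOn.aestronglyMeasurable _ measurableSet_Ioo
        apply ContinuousOn.mul
        · apply ContinuousOn.rpow_const (Continuous.continuousOn (by fun_prop))
          intro x hx
          left
          exact sub_ne_zero_of_ne (ne_of_gt hx.2)
        · exact hρc.mono (fun x hx => lt_trans hT₀0 hx.1)
      · filter_upwards [ae_restrict_mem measurableSet_Ioo] with s hs
        have h1 : (0:ℝ) < t - s := by linarith [hs.2]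
        have h2 : |ρ s| ≤ M' := by
          have := hM s ⟨hs.1.le, hs.2.le⟩
          rw [Real.norm_eq_abs] at this
          exact le_trans this (le_max_left _ _)
        have hM'0 : 0 ≤ M' := le_max_right _ _
        rw [hKdef]
        simp only [norm_mul, Real.norm_eq_abs]
        rw [abs_of_nonneg (Real.rpow_nonneg h1.le _), abs_of_nonneg hM'0]
        exact mul_le_mul_of_nonneg_left h2 (Real.rpow_nonneg h1.le _)
    have hP1 : IntegrableOn P (Ioc 0 T₀) := hPint.mono_set hsub1
    have hP2 : IntegrableOn P (Ioo T₀ t) := hPint.mono_set hsub2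
    -- splittings
    have hKsplit : ∫ s in Ioo (0:ℝ) t, K s
        = (∫ s in Ioc (0:ℝ) T₀, K s) + ∫ s in Ioo T₀ t, K s := by
      rw [← hun, setIntegral_union hdis measurableSet_Ioo hK1 hK2]
    have hPsplit : (∫ s in Ioc (0:ℝ) T₀, P s) + (∫ s in Ioo T₀ t, P s) = B := by
      rw [← setIntegral_union hdis measurableSet_Ioo hP1 hP2, hun, hPB]
    -- rewrite K on the far piece
    have hKP : EqOn K (fun s => P s * (s^β * ρ s)) (Ioo T₀ t) := by
      intro s hs
      have h0 : (0:ℝ) < s := lt_trans hT₀0 hs.1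
      have h1 : s^(-β) * s^β = 1 := by
        rw [← Real.rpow_add h0, neg_add_cancel, Real.rpow_zero]
      simp only [hKdef, hPdef]
      calc (t-s)^(β-1) * ρ s = (t-s)^(β-1) * ((s^(-β) * s^β) * ρ s) := by rw [h1, one_mul]
        _ = (t-s)^(β-1) * s^(-β) * (s^β * ρ s) := by ring
    have hPg : IntegrableOn (fun s => P s * (s^β * ρ s)) (Ioo T₀ t) :=
      hK2.congr_fun hKP measurableSet_Ioo
    have hKeq2 : ∫ s in Ioo T₀ t, K s = ∫ s in Ioo T₀ t, P s * (s^β * ρ s) :=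
      setIntegral_congr_fun measurableSet_Ioo hKP
    -- error term
    have hE : (∫ s in Ioo T₀ t, K s) - a * (∫ s in Ioo T₀ t, P s)
        = ∫ s in Ioo T₀ t, P s * (s^β * ρ s - a) := by
      have h1 : ∀ s : ℝ, P s * (s^β * ρ s - a) = P s * (s^β * ρ s) - P s * a := by
        intro s; ring
      simp only [h1]
      rw [integral_sub hPg (hP2.mul_const a), integral_mul_const]
      rw [hKeq2]
      ring
    have hPpos : ∀ s ∈ Ioo T₀ t, 0 ≤ P s := by
      intro s hs
      have h1 : (0:ℝ) < t - s := by linarith [hs.2]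
      exact mul_nonneg (Real.rpow_nonneg h1.le _)
        (Real.rpow_nonneg (le_trans hT₀0.le hs.1.le) _)
    have hPle : ∫ s in Ioo T₀ t, P s ≤ B := by
      rw [← hPB]
      apply setIntegral_mono_set hPint
      · filter_upwards [ae_restrict_mem measurableSet_Ioo] with s hs
        have h1 : (0:ℝ) < t - s := by linarith [hs.2]
        exact mul_nonneg (Real.rpow_nonneg h1.le _) (Real.rpow_nonneg hs.1.le _)
      · exact HasSubset.Subset.eventuallyLE hsub2
    have hPnonneg : 0 ≤ ∫ s in Ioo T₀ t, P s :=
      setIntegral_nonneg measurableSet_Ioo hPpos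
    have hEbound : |∫ s in Ioo T₀ t, P s * (s^β * ρ s - a)| ≤ ε/2 := by
      have h1 : |∫ s in Ioo T₀ t, P s * (s^β * ρ s - a)|
          ≤ ∫ s in Ioo T₀ t, |P s * (s^β * ρ s - a)| := by
        simpa only [Real.norm_eq_abs] using norm_integral_le_integral_norm
          (μ := volume.restrict (Ioo T₀ t)) (fun s => P s * (s^β * ρ s - a))
      have h2 : ∫ s in Ioo T₀ t, |P s * (s^β * ρ s - a)|
          ≤ ∫ s in Ioo T₀ t, P s * (ε/(2*B)) := by
        apply setIntegral_mono_on
        · have hPd : IntegrableOn (fun s => P s * (s^β * ρ s - a)) (Ioo T₀ t) := by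
            apply IntegrableOn.congr_fun (hPg.sub (hP2.mul_const a)) _ measurableSet_Ioo
            intro s _
            simp only [Pi.sub_apply]
            ring
          exact hPd.abs
        · exact hP2.mul_const _
        · exact measurableSet_Ioo
        · intro s hs
          rw [abs_mul]
          apply mul_le_mul (le_of_eq (abs_of_nonneg (hPpos s hs))) (hg s hs.1.le)
            (abs_nonneg _) (hPpos s hs)
      have h3 : ∫ s in Ioo T₀ t, P s * (ε/(2*B)) = (∫ s in Ioo T₀ t, P s) * (ε/(2*B)) :=
        integral_mul_const _ _
      have h4 : (∫ s in Ioo T₀ t, P s) * (ε/(2*B)) ≤ B * (ε/(2*B)) :=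
        mul_le_mul_of_nonneg_right hPle (le_of_lt hε')
      have h5 : B * (ε/(2*B)) = ε/2 := by
        field_simp
      linarith
    -- head terms
    have hH1 : |∫ s in Ioc (0:ℝ) T₀, K s| ≤ (t-T₀)^(β-1) * C₁ := by
      have h1 : |∫ s in Ioc (0:ℝ) T₀, K s| ≤ ∫ s in Ioc (0:ℝ) T₀, |K s| := by
        simpa only [Real.norm_eq_abs] using norm_integral_le_integral_norm
          (μ := volume.restrict (Ioc (0:ℝ) T₀)) K
      have h2 : ∫ s in Ioc (0:ℝ) T₀, |K s|
          ≤ ∫ s in Ioc (0:ℝ) T₀, (t-T₀)^(β-1) * |ρ s| := by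
        apply setIntegral_mono_on hK1.abs ((hρT₀.abs).const_mul _) measurableSet_Ioc
        intro s hs
        have h1' : (0:ℝ) < t - s := by have := lt_of_le_of_lt hs.2 htT; linarith
        have h2' : (t-s)^(β-1) ≤ (t-T₀)^(β-1) :=
          Real.rpow_le_rpow_of_nonpos htT0 (by linarith [hs.2]) (by linarith)
        rw [hKdef]
        simp only [abs_mul]
        rw [abs_of_nonneg (Real.rpow_nonneg h1'.le _)]
        exact mul_le_mul_of_nonneg_right h2' (abs_nonneg _)
      have h3 : ∫ s in Ioc (0:ℝ) T₀, (t-T₀)^(β-1) * |ρ s| = (t-T₀)^(β-1) * C₁ :=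
        integral_const_mul _ _
      linarith
    have hH2 : |∫ s in Ioc (0:ℝ) T₀, P s| ≤ (t-T₀)^(β-1) * C₂ := by
      have h1 : |∫ s in Ioc (0:ℝ) T₀, P s| ≤ ∫ s in Ioc (0:ℝ) T₀, |P s| := by
        simpa only [Real.norm_eq_abs] using norm_integral_le_integral_norm
          (μ := volume.restrict (Ioc (0:ℝ) T₀)) P
      have h2 : ∫ s in Ioc (0:ℝ) T₀, |P s|
          ≤ ∫ s in Ioc (0:ℝ) T₀, (t-T₀)^(β-1) * s^(-β) := by
        apply setIntegral_mono_on hP1.abs (hC₂int.const_mul _) measurableSet_Ioc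
        intro s hs
        have h1' : (0:ℝ) < t - s := by have := lt_of_le_of_lt hs.2 htT; linarith
        have h2' : (t-s)^(β-1) ≤ (t-T₀)^(β-1) :=
          Real.rpow_le_rpow_of_nonpos htT0 (by linarith [hs.2]) (by linarith)
        rw [hPdef]
        simp only [abs_mul]
        rw [abs_of_nonneg (Real.rpow_nonneg h1'.le _),
          abs_of_nonneg (Real.rpow_nonneg hs.1.le _)]
        exact mul_le_mul_of_nonneg_right h2' (Real.rpow_nonneg hs.1.le _)
      have h3 : ∫ s in Ioc (0:ℝ) T₀, (t-T₀)^(β-1) * s^(-β) = (t-T₀)^(β-1) * C₂ :=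
        integral_const_mul _ _
      linarith
    -- assemble
    rw [Real.dist_eq]
    have hdecomp : (∫ s in Ioo (0:ℝ) t, (t - s) ^ (β - 1) * ρ s) - a * B
        = (∫ s in Ioc (0:ℝ) T₀, K s) - a * (∫ s in Ioc (0:ℝ) T₀, P s)
          + ∫ s in Ioo T₀ t, P s * (s^β * ρ s - a) := by
      rw [← hE]
      have : (∫ s in Ioo (0:ℝ) t, (t - s) ^ (β - 1) * ρ s) = ∫ s in Ioo (0:ℝ) t, K s := rfl
      rw [this, hKsplit, ← hPsplit]
      ring
    rw [hdecomp]
    have step : |(∫ s in Ioc (0:ℝ) T₀, K s) - a * (∫ s in Ioc (0:ℝ) T₀, P s)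
          + ∫ s in Ioo T₀ t, P s * (s^β * ρ s - a)|
        ≤ (t-T₀)^(β-1) * C₁ + |a| * ((t-T₀)^(β-1) * C₂) + ε/2 := by
      calc |(∫ s in Ioc (0:ℝ) T₀, K s) - a * (∫ s in Ioc (0:ℝ) T₀, P s)
          + ∫ s in Ioo T₀ t, P s * (s^β * ρ s - a)|
          ≤ |(∫ s in Ioc (0:ℝ) T₀, K s) - a * (∫ s in Ioc (0:ℝ) T₀, P s)|
            + |∫ s in Ioo T₀ t, P s * (s^β * ρ s - a)| := abs_add_le _ _
        _ ≤ |∫ s in Ioc (0:ℝ) T₀, K s| + |a * (∫ s in Ioc (0:ℝ) T₀, P s)|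
            + |∫ s in Ioo T₀ t, P s * (s^β * ρ s - a)| := by
              have := abs_sub (∫ s in Ioc (0:ℝ) T₀, K s) (a * ∫ s in Ioc (0:ℝ) T₀, P s)
              linarith [hEbound]
        _ ≤ (t-T₀)^(β-1) * C₁ + |a| * ((t-T₀)^(β-1) * C₂) + ε/2 := by
              rw [abs_mul]
              have := mul_le_mul_of_nonneg_left hH2 (abs_nonneg a)
              linarith [hEbound]
    have hfin : (t-T₀)^(β-1) * C₁ + |a| * ((t-T₀)^(β-1) * C₂) + ε/2 < ε := by
      have heq : (t-T₀)^(β-1) * C₁ + |a| * ((t-T₀)^(β-1) * C₂)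
          = (t - T₀)^(β-1) * (C₁ + |a| * C₂) := by ring
      linarith
    exact lt_of_le_of_lt step hfin
  obtain ⟨N, hN⟩ := eventually_atTop.mp hev
  exact ⟨N, hN⟩
end

section
/- Let 0<β<1, 0≤μ<1, p>1/β, and x₀>0. Assume hypotheses (1)-(3): φ is nonnegative, continuous and nondecreasing on [0,+∞) with φ(t) ≤ M t^μ for some M≥0 and all t≥0; t↦t^β l(t) is nonnegative, continuous and nonincreasing on (0,+∞) with t↦t^{(1-μ)(1-β)} l(t) in L^p[0,1]; t↦t^β k(t) is nonnegative, continuous and nonincreasing on (0,+∞) with t↦t^{1-β} k(t) in L^p[0,1]. Suppose lim_{t→+∞} t^β l(t) = 0 and lim_{t→+∞} t^β k(t) = 0. Then there exists a nonnegative, strictly decreasing continuous function x on (0,+∞) with t↦t^{1-β}x(t) extending continuously to [0,+∞), satisfying x(t) = x₀ t^{β-1} + (1/Γ(β)) ∫₀ᵗ (t-s)^{β-1} [l(s)φ(x(s)) + k(s)] ds for all t>0, and lim_{t→+∞} x(t) = 0. -/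
open MeasureTheory Set Filter
open scoped ENNReal

theorem lint_scale (t : ℝ) (ht : 0 < t) (f : ℝ → ℝ≥0∞) :
    ∫⁻ s in Ioo (0:ℝ) t, f s = ENNReal.ofReal t * ∫⁻ τ in Ioo (0:ℝ) 1, f (t * τ) := by
  set e : ℝ ≃ᵐ ℝ := (Homeomorph.mulLeft₀ t ht.ne').toMeasurableEquiv with he
  have hecoe : ∀ τ, e τ = t * τ := fun τ => rfl
  have hpre : e ⁻¹' (Ioo (0:ℝ) t) = Ioo 0 1 := by
    ext τ
    simp only [mem_preimage, hecoe, mem_Ioo]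
    constructor
    · rintro ⟨h1, h2⟩
      have hτ : 0 < τ := by nlinarith
      exact ⟨hτ, by nlinarith⟩
    · rintro ⟨h1, h2⟩
      exact ⟨by positivity, by nlinarith⟩
  have hmap : Measure.map e (volume.restrict (Ioo (0:ℝ) 1)) =
      (ENNReal.ofReal t⁻¹) • volume.restrict (Ioo (0:ℝ) t) := by
    have h2 := MeasurableEquiv.restrict_map e volume (Ioo (0:ℝ) t)
    rw [hpre] at h2
    rw [← h2]
    have : Measure.map e volume = ENNReal.ofReal |t⁻¹| • volume := by
      have := Real.map_volume_mul_left ht.ne'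
      convert this using 2
      exact funext hecoe
    rw [this, Measure.restrict_smul, abs_of_pos (inv_pos.2 ht)]
  have hl := MeasureTheory.lintegral_map_equiv (μ := volume.restrict (Ioo (0:ℝ) 1)) f e
  rw [hmap, lintegral_smul_measure, smul_eq_mul] at hl
  simp only [hecoe] at hl
  rw [← hl, ← mul_assoc, ← ENNReal.ofReal_mul ht.le, mul_inv_cancel₀ ht.ne',
    ENNReal.ofReal_one, one_mul]

/-- finiteness of Beta-type lintegrals -/
theorem betaFin {b c : ℝ} (hb : -1 < b) (hc : -1 < c) :
    ∫⁻ τ in Ioo (0:ℝ) 1, ENNReal.ofReal ((1-τ) ^ b * τ ^ c) < ⊤ := by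
  have i1 : IntegrableOn (fun τ : ℝ => τ ^ c) (Ioo 0 1) := by
    have := (intervalIntegral.intervalIntegrable_rpow' (a := 0) (b := 1) hc)
    rw [intervalIntegrable_iff_integrableOn_Ioc_of_le (by norm_num)] at this
    exact this.mono_set Ioo_subset_Ioc_self
  have i2 : IntegrableOn (fun τ : ℝ => (1-τ) ^ b) (Ioo 0 1) := by
    have := ((intervalIntegral.intervalIntegrable_rpow' (a := 0) (b := 1) hb).comp_sub_left 1).symm
    rw [show (1:ℝ) - 1 = 0 by norm_num, show (1:ℝ) - 0 = 1 by norm_num] at this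
    rw [intervalIntegrable_iff_integrableOn_Ioc_of_le (by norm_num)] at this
    exact this.mono_set Ioo_subset_Ioc_self
  set Kb : ℝ := max 1 ((2:ℝ)⁻¹ ^ b) with hKb
  set Kc : ℝ := max 1 ((2:ℝ)⁻¹ ^ c) with hKc
  have key : ∀ τ ∈ Ioo (0:ℝ) 1, (1-τ) ^ b * τ ^ c ≤ Kb * τ ^ c + Kc * (1-τ) ^ b := by
    intro τ hτ
    obtain ⟨h0, h1⟩ := hτ
    rcases le_or_gt τ 2⁻¹ with h | h
    · have h2 : (1-τ) ^ b ≤ Kb := by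
        rcases le_or_gt 0 b with hb0 | hb0
        · exact le_max_of_le_left (Real.rpow_le_one (by linarith) (by linarith) hb0)
        · refine le_max_of_le_right (Real.rpow_le_rpow_of_nonpos (by norm_num) (by linarith) hb0.le)
      have : (1-τ) ^ b * τ ^ c ≤ Kb * τ ^ c :=
        mul_le_mul_of_nonneg_right h2 (Real.rpow_nonneg h0.le c)
      have hpos : 0 ≤ Kc * (1-τ) ^ b :=
        mul_nonneg (le_trans zero_le_one (le_max_left _ _)) (Real.rpow_nonneg (by linarith) b)
      linarith
    · have h2 : τ ^ c ≤ Kc := by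
        rcases le_or_gt 0 c with hc0 | hc0
        · exact le_max_of_le_left (Real.rpow_le_one h0.le h1.le hc0)
        · exact le_max_of_le_right (Real.rpow_le_rpow_of_nonpos (by norm_num) h.le hc0.le)
      have : (1-τ) ^ b * τ ^ c ≤ Kc * (1-τ) ^ b := by
        rw [mul_comm]
        exact mul_le_mul_of_nonneg_right h2 (Real.rpow_nonneg (by linarith) b)
      have hpos : 0 ≤ Kb * τ ^ c :=
        mul_nonneg (le_trans zero_le_one (le_max_left _ _)) (Real.rpow_nonneg h0.le c)
      linarith
  have meas1 : AEMeasurable (fun τ : ℝ => ENNReal.ofReal (Kb * τ ^ c))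
      (volume.restrict (Ioo (0:ℝ) 1)) :=
    ENNReal.measurable_ofReal.comp_aemeasurable (i1.const_mul Kb).aemeasurable
  calc ∫⁻ τ in Ioo (0:ℝ) 1, ENNReal.ofReal ((1-τ) ^ b * τ ^ c)
      ≤ ∫⁻ τ in Ioo (0:ℝ) 1, (ENNReal.ofReal (Kb * τ ^ c) + ENNReal.ofReal (Kc * (1-τ) ^ b)) := by
        refine lintegral_mono_ae ?_
        filter_upwards [ae_restrict_mem measurableSet_Ioo] with τ hτ
        exact le_trans (ENNReal.ofReal_le_ofReal (key τ hτ)) ENNReal.ofReal_add_le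
    _ = (∫⁻ τ in Ioo (0:ℝ) 1, ENNReal.ofReal (Kb * τ ^ c)) +
        ∫⁻ τ in Ioo (0:ℝ) 1, ENNReal.ofReal (Kc * (1-τ) ^ b) := lintegral_add_left' meas1 _
    _ < ⊤ := by
        refine ENNReal.add_lt_top.2 ⟨?_, ?_⟩
        · refine lt_of_le_of_lt (lintegral_mono fun τ => Real.ofReal_le_enorm _) ?_
          exact ((i1.const_mul Kb).hasFiniteIntegral)
        · refine lt_of_le_of_lt (lintegral_mono fun τ => Real.ofReal_le_enorm _) ?_
          exact ((i2.const_mul Kc).hasFiniteIntegral)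

theorem cheb {p : ℝ} (hp : 0 < p) (f : ℝ → ℝ) (m : ℝ) (hm : 0 < m)
    (h0 : ∀ σ ∈ Ioc (0:ℝ) 1, 0 ≤ f σ)
    (hlow : ∀ σ ∈ Ioc (0:ℝ) 1, ∀ σ' ∈ Ioc (σ/2) σ, m * f σ ≤ f σ')
    (hint : IntegrableOn (fun σ => |f σ| ^ p) (Ioc (0:ℝ) 1)) :
    ∃ C : ℝ, 0 ≤ C ∧ ∀ σ ∈ Ioc (0:ℝ) 1, f σ ≤ C * σ ^ (-(1/p)) := by
  set I : ℝ := ∫ σ in Ioc (0:ℝ) 1, |f σ| ^ p with hI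
  have hI0 : 0 ≤ I := setIntegral_nonneg measurableSet_Ioc
    (fun σ _ => Real.rpow_nonneg (abs_nonneg _) p)
  refine ⟨m⁻¹ * (2*I) ^ (1/p), by positivity, ?_⟩
  intro σ hσ
  obtain ⟨hσ0, hσ1⟩ := hσ
  have hsub : Ioc (σ/2) σ ⊆ Ioc (0:ℝ) 1 := Ioc_subset_Ioc (by linarith) hσ1
  have h2 : IntegrableOn (fun σ' => |f σ'| ^ p) (Ioc (σ/2) σ) := hint.mono_set hsub
  have hmf : 0 ≤ m * f σ := mul_nonneg hm.le (h0 σ ⟨hσ0, hσ1⟩)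
  have h3 : (σ/2) * (m * f σ) ^ p ≤ ∫ σ' in Ioc (σ/2) σ, |f σ'| ^ p := by
    have hconst : ∫ _σ' in Ioc (σ/2) σ, (m * f σ) ^ p = (σ/2) * (m * f σ) ^ p := by
      rw [setIntegral_const, measureReal_def, Real.volume_Ioc, smul_eq_mul,
        ENNReal.toReal_ofReal (by linarith)]
      ring_nf
    rw [← hconst]
    refine setIntegral_mono_on (integrableOn_const (by
      rw [Real.volume_Ioc]; exact ENNReal.ofReal_ne_top)) h2 measurableSet_Ioc ?_
    intro σ' hσ'
    have := hlow σ ⟨hσ0, hσ1⟩ σ' hσ'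
    exact Real.rpow_le_rpow hmf (this.trans (le_abs_self _)) hp.le
  have h4 : ∫ σ' in Ioc (σ/2) σ, |f σ'| ^ p ≤ I := by
    refine setIntegral_mono_set hint ?_ (HasSubset.Subset.eventuallyLE hsub)
    filter_upwards with σ' using Real.rpow_nonneg (abs_nonneg _) p
  have h5 : (m * f σ) ^ p ≤ 2 * I / σ := by
    rw [le_div_iff₀ hσ0]
    nlinarith
  have h6 : m * f σ ≤ (2 * I / σ) ^ (1/p) := by
    calc m * f σ = ((m * f σ) ^ p) ^ (1/p) := by
          rw [← Real.rpow_mul hmf, mul_one_div, div_self hp.ne', Real.rpow_one]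
      _ ≤ (2 * I / σ) ^ (1/p) :=
          Real.rpow_le_rpow (Real.rpow_nonneg hmf p) h5 (by positivity)
  have h7 : (2 * I / σ) ^ (1/p) = (2*I) ^ (1/p) * σ ^ (-(1/p)) := by
    rw [Real.div_rpow (by positivity) hσ0.le, Real.rpow_neg hσ0.le, div_eq_mul_inv]
  calc f σ = m⁻¹ * (m * f σ) := by field_simp
    _ ≤ m⁻¹ * ((2*I) ^ (1/p) * σ ^ (-(1/p))) := by
        rw [h7] at h6
        exact mul_le_mul_of_nonneg_left h6 (by positivity)
    _ = m⁻¹ * (2*I) ^ (1/p) * σ ^ (-(1/p)) := by ring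

theorem cont_off_ctbl (g : ℝ → ℝ) (hg : AntitoneOn g (Ioi 0)) :
    ∃ D : Set ℝ, D.Countable ∧ ∀ s ∈ Ioi (0:ℝ), s ∉ D → ContinuousAt g s := by
  have hge : Antitone fun u => g (Real.exp u) := fun u v huv =>
    hg (Real.exp_pos u) (Real.exp_pos v) (Real.exp_le_exp.2 huv)
  refine ⟨Real.exp '' {u | ¬ContinuousAt (fun u => g (Real.exp u)) u},
    hge.countable_not_continuousAt.image _, ?_⟩
  intro s hs hsD
  have h0 : ContinuousAt (fun u => g (Real.exp u)) (Real.log s) := by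
    by_contra h
    exact hsD ⟨Real.log s, h, Real.exp_log hs⟩
  have h1 : ContinuousAt ((fun u => g (Real.exp u)) ∘ Real.log) s :=
    h0.comp (Real.continuousAt_log (ne_of_gt hs))
  refine h1.congr ?_
  filter_upwards [Ioi_mem_nhds hs] with y hy
  simp only [Function.comp_apply, Real.exp_log hy]


set_option maxHeartbeats 1600000 in
/-- Theorem 3.4: under hypotheses (1)-(3), with `lim t^β l(t) = 0` and
`lim t^β k(t) = 0`, the equation has at least one decreasing solution in
`C⁺_{1-β}(0, ∞)` tending to `0`. -/
theorem stmt_11 (β μ p x₀ M : ℝ)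
    (hβ0 : 0 < β) (hβ1 : β < 1) (hμ0 : 0 ≤ μ) (hμ1 : μ < 1) (hp : 1 / β < p)
    (hx₀ : 0 < x₀) (hM : 0 ≤ M)
    (φ l k : ℝ → ℝ)
    (hφ0 : ∀ t ∈ Ici (0:ℝ), 0 ≤ φ t) (hφc : ContinuousOn φ (Ici 0))
    (hφmono : MonotoneOn φ (Ici 0)) (hφM : ∀ t ∈ Ici (0:ℝ), φ t ≤ M * t ^ μ)
    (hl0 : ∀ t ∈ Ioi (0:ℝ), 0 ≤ t ^ β * l t)
    (hlc : ContinuousOn (fun t => t ^ β * l t) (Ioi 0))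
    (hlmono : AntitoneOn (fun t => t ^ β * l t) (Ioi 0))
    (hlLp : IntegrableOn (fun t => |t ^ ((1 - μ) * (1 - β)) * l t| ^ p) (Ioc (0:ℝ) 1))
    (hk0 : ∀ t ∈ Ioi (0:ℝ), 0 ≤ t ^ β * k t)
    (hkc : ContinuousOn (fun t => t ^ β * k t) (Ioi 0))
    (hkmono : AntitoneOn (fun t => t ^ β * k t) (Ioi 0))
    (hkLp : IntegrableOn (fun t => |t ^ (1 - β) * k t| ^ p) (Ioc (0:ℝ) 1))
    (ha : Tendsto (fun t => t ^ β * l t) atTop (nhds 0))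
    (hb : Tendsto (fun t => t ^ β * k t) atTop (nhds 0)) :
    ∃ x : ℝ → ℝ, ContinuousOn x (Ioi 0) ∧ (∀ t ∈ Ioi (0:ℝ), 0 ≤ x t) ∧
      StrictAntiOn x (Ioi 0) ∧
      (∃ X : ℝ → ℝ, ContinuousOn X (Ici 0) ∧ (∀ t ∈ Ici (0:ℝ), 0 ≤ X t) ∧
        ∀ t ∈ Ioi (0:ℝ), X t = t ^ (1 - β) * x t) ∧
      (∀ t ∈ Ioi (0:ℝ), x t = x₀ * t ^ (β - 1) +
        (1 / Real.Gamma β) *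
          ∫ s in Ioo (0:ℝ) t, (t - s) ^ (β - 1) * (l s * φ (x s) + k s)) ∧
      Tendsto x atTop (nhds 0) := by
  -- basic exponent facts
  have hp0 : 0 < p := lt_trans (by positivity) hp
  have hp1 : 1 < p := by
    have h1β : 1 < 1/β := by
      rw [lt_div_iff₀ hβ0]; linarith
    linarith
  have hip : 1 / p < β := by
    rw [div_lt_iff₀ hp0]
    rw [div_lt_iff₀ hβ0] at hp
    nlinarith
  have hβ1' : (-1:ℝ) < β - 1 := by linarith
  have hγβ : (-1:ℝ) < (2*β - 1 - 1/p) - β := by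
    have : 0 < 1/p := by positivity
    nlinarith [hip]
  have hΓ : 0 < Real.Gamma β := Real.Gamma_pos_of_pos hβ0
  have hl_nonneg : ∀ s, s ∈ Ioi (0:ℝ) → 0 ≤ l s := by
    intro s hs
    have h := hl0 s hs
    have hsβ : (0:ℝ) < s ^ β := Real.rpow_pos_of_pos hs β
    nlinarith
  have hk_nonneg : ∀ s, s ∈ Ioi (0:ℝ) → 0 ≤ k s := by
    intro s hs
    have h := hk0 s hs
    have hsβ : (0:ℝ) < s ^ β := Real.rpow_pos_of_pos hs β
    nlinarith
  -- Chebyshev-type pointwise bounds from the L^p hypotheses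
  have hgen : ∀ (g : ℝ → ℝ) (a : ℝ), (∀ s ∈ Ioi (0:ℝ), 0 ≤ s ^ β * g s) →
      AntitoneOn (fun s => s ^ β * g s) (Ioi 0) →
      IntegrableOn (fun s => |s ^ a * g s| ^ p) (Ioc 0 1) →
      ∃ C : ℝ, 0 ≤ C ∧ ∀ s ∈ Ioc (0:ℝ) 1, g s ≤ C * s ^ (-a - 1/p) := by
    intro g a hg0 hganti hgint
    set e : ℝ := a - β with he_def
    set m : ℝ := min ((2:ℝ)⁻¹ ^ e) 1 with hm_def
    have hm : 0 < m := lt_min (Real.rpow_pos_of_pos (by norm_num) e) one_pos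
    have hgnn : ∀ s ∈ Ioi (0:ℝ), 0 ≤ g s := by
      intro s hs
      have h := hg0 s hs
      have hβpos : (0:ℝ) < s ^ β := Real.rpow_pos_of_pos hs β
      nlinarith
    have h0 : ∀ σ ∈ Ioc (0:ℝ) 1, 0 ≤ σ ^ a * g σ := by
      intro σ hσ
      exact mul_nonneg (Real.rpow_pos_of_pos hσ.1 a).le (hgnn σ hσ.1)
    have hlow : ∀ σ ∈ Ioc (0:ℝ) 1, ∀ σ' ∈ Ioc (σ/2) σ,
        m * (σ ^ a * g σ) ≤ σ' ^ a * g σ' := by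
      intro σ hσ σ' hσ'
      have hσ0 : (0:ℝ) < σ := hσ.1
      have hσ'0 : (0:ℝ) < σ' := lt_trans (by linarith) hσ'.1
      have key : m * σ ^ e ≤ σ' ^ e := by
        rcases le_or_gt 0 e with he0 | he0
        · calc m * σ ^ e ≤ (2:ℝ)⁻¹ ^ e * σ ^ e :=
              mul_le_mul_of_nonneg_right (min_le_left _ _) (Real.rpow_nonneg hσ0.le e)
            _ = (σ/2) ^ e := by
              rw [show σ/2 = 2⁻¹ * σ from by ring,
                Real.mul_rpow (by norm_num) hσ0.le]
            _ ≤ σ' ^ e := Real.rpow_le_rpow (by positivity) hσ'.1.le he0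
        · calc m * σ ^ e ≤ 1 * σ ^ e :=
              mul_le_mul_of_nonneg_right (min_le_right _ _) (Real.rpow_nonneg hσ0.le e)
          _ = σ ^ e := one_mul _
          _ ≤ σ' ^ e := Real.rpow_le_rpow_of_nonpos hσ'0 hσ'.2 he0.le
      have hae : ∀ u : ℝ, 0 < u → u ^ a = u ^ e * u ^ β := by
        intro u hu
        rw [← Real.rpow_add hu]
        congr 1
        rw [he_def]
        ring
      calc m * (σ ^ a * g σ) = (m * σ ^ e) * (σ ^ β * g σ) := by
            rw [hae σ hσ0]
            ring
        _ ≤ σ' ^ e * (σ ^ β * g σ) :=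
            mul_le_mul_of_nonneg_right key (hg0 σ hσ0)
        _ ≤ σ' ^ e * (σ' ^ β * g σ') :=
            mul_le_mul_of_nonneg_left (hganti hσ'0 hσ0 hσ'.2) (Real.rpow_nonneg hσ'0.le e)
        _ = σ' ^ a * g σ' := by
            rw [hae σ' hσ'0]
            ring
    obtain ⟨C, hC0, hC⟩ := cheb hp0 (fun σ => σ ^ a * g σ) m hm h0 hlow hgint
    refine ⟨C, hC0, ?_⟩
    intro s hs
    have hs0 : (0:ℝ) < s := hs.1
    calc g s = s ^ (-a) * (s ^ a * g s) := by
          rw [← mul_assoc, ← Real.rpow_add hs0]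
          norm_num
      _ ≤ s ^ (-a) * (C * s ^ (-(1/p))) :=
          mul_le_mul_of_nonneg_left (hC s hs) (Real.rpow_nonneg hs0.le _)
      _ = C * s ^ (-a - 1/p) := by
          rw [show -a - 1/p = -a + -(1/p) from by ring, Real.rpow_add hs0]
          ring
  have hCl : ∃ Cl : ℝ, 0 ≤ Cl ∧ ∀ s ∈ Ioc (0:ℝ) 1,
      l s ≤ Cl * s ^ (-((1-μ)*(1-β)) - 1/p) :=
    hgen l ((1-μ)*(1-β)) hl0 hlmono hlLp
  have hCk : ∃ Ck : ℝ, 0 ≤ Ck ∧ ∀ s ∈ Ioc (0:ℝ) 1,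
      k s ≤ Ck * s ^ (β - 1 - 1/p) := by
    obtain ⟨C, hC0, hC⟩ := hgen k (1-β) hk0 hkmono hkLp
    refine ⟨C, hC0, ?_⟩
    intro s hs
    have := hC s hs
    rwa [show -(1-β) - 1/p = β - 1 - 1/p from by ring] at this
  obtain ⟨Cl, hCl0, hCl⟩ := hCl
  obtain ⟨Ck, hCk0, hCk⟩ := hCk
  -- the Beta integral
  set J : ℝ≥0∞ := ∫⁻ τ in Ioo (0:ℝ) 1,
      ENNReal.ofReal ((1-τ) ^ (β-1) * τ ^ ((2*β - 1 - 1/p) - β)) with hJ_def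
  have hJtop : J ≠ ⊤ := (betaFin hβ1' hγβ).ne
  set Jr : ℝ := J.toReal with hJr_def
  have hJr0 : 0 ≤ Jr := ENNReal.toReal_nonneg
  have hJ_eq : J = ENNReal.ofReal Jr := (ENNReal.ofReal_toReal hJtop).symm
  -- the monotone envelope of φ on ℝ≥0∞
  set phiE : ℝ≥0∞ → ℝ≥0∞ := fun a => if a = ⊤ then ⊤ else ENNReal.ofReal (φ a.toReal)
    with hphiE_def
  have hphiE_ofReal : ∀ r : ℝ, 0 ≤ r → phiE (ENNReal.ofReal r) = ENNReal.ofReal (φ r) := by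
    intro r hr
    simp only [hphiE_def, ENNReal.ofReal_ne_top, if_false, ENNReal.toReal_ofReal hr]
  have hphiE_mono : Monotone phiE := by
    intro a b hab
    simp only [hphiE_def]
    by_cases hb : b = ⊤
    · simp [hb]
    · have ha : a ≠ ⊤ := ne_top_of_le_ne_top hb hab
      simp only [ha, hb, if_false]
      exact ENNReal.ofReal_le_ofReal (hφmono ENNReal.toReal_nonneg ENNReal.toReal_nonneg
        (ENNReal.toReal_mono hb hab))
  -- the operator
  set Fop : (ℝ → ℝ≥0∞) → ℝ → ℝ≥0∞ := fun y t => if 0 < t then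
      ENNReal.ofReal (x₀ * t ^ (β - 1)) + ENNReal.ofReal (1 / Real.Gamma β) *
        ∫⁻ s in Ioo (0:ℝ) t, ENNReal.ofReal ((t - s) ^ (β - 1)) *
          (ENNReal.ofReal (l s) * phiE (y s) + ENNReal.ofReal (k s)) else 0 with hFop_def
  set GE : (ℝ → ℝ≥0∞) → ℝ → ℝ≥0∞ := fun y s =>
      ENNReal.ofReal (s ^ β * l s) * phiE (y s) + ENNReal.ofReal (s ^ β * k s) with hGE_def
  set wW : ℝ → ℝ≥0∞ := fun τ => ENNReal.ofReal ((1 - τ) ^ (β - 1) * τ ^ (-β)) with hwW_def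
  -- substitution representation
  have hrep : ∀ (y : ℝ → ℝ≥0∞) (t : ℝ), 0 < t →
      (∫⁻ s in Ioo (0:ℝ) t, ENNReal.ofReal ((t - s) ^ (β - 1)) *
          (ENNReal.ofReal (l s) * phiE (y s) + ENNReal.ofReal (k s)))
        = ∫⁻ τ in Ioo (0:ℝ) 1, wW τ * GE y (t * τ) := by
    intro y t ht
    rw [lint_scale t ht, ← lintegral_const_mul' _ _ ENNReal.ofReal_ne_top]
    refine lintegral_congr_ae ?_
    filter_upwards [ae_restrict_mem measurableSet_Ioo] with τ hτ
    obtain ⟨hτ0, hτ1⟩ := hτ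
    simp only [hGE_def, hwW_def]
    have h1 : ENNReal.ofReal ((t*τ)^β * l (t*τ)) =
        ENNReal.ofReal ((t*τ)^β) * ENNReal.ofReal (l (t*τ)) :=
      ENNReal.ofReal_mul (Real.rpow_nonneg (by positivity) β)
    have h2 : ENNReal.ofReal ((t*τ)^β * k (t*τ)) =
        ENNReal.ofReal ((t*τ)^β) * ENNReal.ofReal (k (t*τ)) :=
      ENNReal.ofReal_mul (Real.rpow_nonneg (by positivity) β)
    rw [h1, h2]
    have hkey : ENNReal.ofReal t * ENNReal.ofReal ((t - t*τ)^(β-1)) =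
        ENNReal.ofReal ((1-τ)^(β-1) * τ^(-β)) * ENNReal.ofReal ((t*τ)^β) := by
      rw [← ENNReal.ofReal_mul ht.le, ← ENNReal.ofReal_mul
        (mul_nonneg (Real.rpow_nonneg (by linarith) _) (Real.rpow_nonneg hτ0.le _))]
      congr 1
      have e1 : t - t*τ = t*(1-τ) := by ring
      have e2 : τ ^ (-β) * τ ^ β = 1 := by
        rw [← Real.rpow_add hτ0]
        norm_num
      have e3 : t * t ^ (β-1) = t ^ β := by
        nth_rewrite 1 [← Real.rpow_one t]
        rw [← Real.rpow_add ht]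
        norm_num
      calc t * (t - t*τ)^(β-1) = t * (t^(β-1) * (1-τ)^(β-1)) := by
            rw [e1, Real.mul_rpow ht.le (by linarith)]
        _ = (t * t^(β-1)) * (1-τ)^(β-1) := by ring
        _ = t^β * (1-τ)^(β-1) := by rw [e3]
        _ = ((1-τ)^(β-1) * τ^(-β)) * ((t*τ)^β) := by
            rw [Real.mul_rpow ht.le hτ0.le,
              show ((1-τ)^(β-1) * τ^(-β)) * ((t:ℝ)^β*τ^β) =
                (t^β * (1-τ)^(β-1)) * (τ^(-β)*τ^β) from by ring, e2, mul_one]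
    calc ENNReal.ofReal t * (ENNReal.ofReal ((t - t*τ)^(β-1)) *
          (ENNReal.ofReal (l (t*τ)) * phiE (y (t*τ)) + ENNReal.ofReal (k (t*τ))))
        = (ENNReal.ofReal t * ENNReal.ofReal ((t - t*τ)^(β-1))) *
          (ENNReal.ofReal (l (t*τ)) * phiE (y (t*τ)) + ENNReal.ofReal (k (t*τ))) := by ring
      _ = (ENNReal.ofReal ((1-τ)^(β-1) * τ^(-β)) * ENNReal.ofReal ((t*τ)^β)) *
          (ENNReal.ofReal (l (t*τ)) * phiE (y (t*τ)) + ENNReal.ofReal (k (t*τ))) := by rw [hkey]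
      _ = ENNReal.ofReal ((1-τ)^(β-1) * τ^(-β)) *
          (ENNReal.ofReal ((t*τ)^β) * ENNReal.ofReal (l (t*τ)) * phiE (y (t*τ)) +
           ENNReal.ofReal ((t*τ)^β) * ENNReal.ofReal (k (t*τ))) := by ring
  -- monotonicity of the operator
  have hmono_causal : ∀ (y z : ℝ → ℝ≥0∞) (t : ℝ), (∀ s ∈ Ioo (0:ℝ) t, y s ≤ z s) →
      Fop y t ≤ Fop z t := by
    intro y z t hyz
    simp only [hFop_def]
    by_cases ht : 0 < t
    · simp only [if_pos ht]
      refine add_le_add le_rfl (mul_le_mul' le_rfl ?_)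
      refine lintegral_mono_ae ?_
      filter_upwards [ae_restrict_mem measurableSet_Ioo] with s hs
      exact mul_le_mul' le_rfl (add_le_add (mul_le_mul' le_rfl (hphiE_mono (hyz s hs))) le_rfl)
    · simp only [if_neg ht, le_refl]
  have hmono : ∀ (y z : ℝ → ℝ≥0∞), (∀ s, y s ≤ z s) → ∀ t, Fop y t ≤ Fop z t := by
    intro y z h t
    exact hmono_causal y z t fun s _ => h s
  -- antitonicity preservation
  have hGE_anti : ∀ y : ℝ → ℝ≥0∞, AntitoneOn y (Ioi 0) → AntitoneOn (GE y) (Ioi 0) := by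
    intro y hy s₁ hs₁ s₂ hs₂ h12
    simp only [hGE_def]
    refine add_le_add (mul_le_mul' ?_ ?_) ?_
    · exact ENNReal.ofReal_le_ofReal (hlmono hs₁ hs₂ h12)
    · exact hphiE_mono (hy hs₁ hs₂ h12)
    · exact ENNReal.ofReal_le_ofReal (hkmono hs₁ hs₂ h12)
  have hFanti : ∀ y : ℝ → ℝ≥0∞, AntitoneOn y (Ioi 0) → AntitoneOn (Fop y) (Ioi 0) := by
    intro y hy t₁ ht₁ t₂ ht₂ h12
    have ht₁' : (0:ℝ) < t₁ := ht₁
    have ht₂' : (0:ℝ) < t₂ := ht₂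
    simp only [hFop_def, if_pos ht₁', if_pos ht₂']
    rw [hrep y t₁ ht₁', hrep y t₂ ht₂']
    refine add_le_add (ENNReal.ofReal_le_ofReal ?_) (mul_le_mul' le_rfl ?_)
    · exact mul_le_mul_of_nonneg_left
        (Real.rpow_le_rpow_of_nonpos ht₁' h12 (by linarith)) hx₀.le
    · refine lintegral_mono_ae ?_
      filter_upwards [ae_restrict_mem measurableSet_Ioo] with τ hτ
      refine mul_le_mul' le_rfl ?_
      exact hGE_anti y hy (mem_Ioi.2 (mul_pos ht₁' hτ.1)) (mem_Ioi.2 (mul_pos ht₂' hτ.1))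
        (mul_le_mul_of_nonneg_right h12 hτ.1.le)
  -- the fundamental estimate
  have hboundLem : ∀ (y : ℝ → ℝ≥0∞) (C : ℝ), 0 ≤ C →
      (∀ s ∈ Ioc (0:ℝ) 1, y s ≤ ENNReal.ofReal (C * s ^ (β-1))) →
      ∀ t ∈ Ioc (0:ℝ) 1, (∫⁻ τ in Ioo (0:ℝ) 1, wW τ * GE y (t * τ))
        ≤ ENNReal.ofReal ((M*Cl*C^μ + Ck) * t ^ (2*β - 1 - 1/p) * Jr) := by
    intro y C hC0 hyC t ht
    have ht0 : (0:ℝ) < t := ht.1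
    have hA0 : (0:ℝ) ≤ M*Cl*C^μ + Ck := by
      have : (0:ℝ) ≤ C ^ μ := Real.rpow_nonneg hC0 μ
      positivity
    have htγ : (0:ℝ) ≤ t ^ (2*β - 1 - 1/p) := Real.rpow_nonneg ht0.le _
    have hpoint : ∀ τ ∈ Ioo (0:ℝ) 1, wW τ * GE y (t * τ) ≤
        ENNReal.ofReal ((M*Cl*C^μ + Ck) * t ^ (2*β - 1 - 1/p)) *
          ENNReal.ofReal ((1-τ) ^ (β-1) * τ ^ ((2*β - 1 - 1/p) - β)) := by
      intro τ hτ
      obtain ⟨hτ0, hτ1⟩ := hτ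
      set s : ℝ := t * τ with hs_def
      have hs0 : (0:ℝ) < s := mul_pos ht0 hτ0
      have hs1 : s ≤ 1 := by
        rw [hs_def]
        nlinarith [ht.2]
      have hsIoc : s ∈ Ioc (0:ℝ) 1 := ⟨hs0, hs1⟩
      have hsβ : (0:ℝ) ≤ s ^ β := Real.rpow_nonneg hs0.le β
      -- bound on phiE (y s)
      have hphi_le : phiE (y s) ≤ ENNReal.ofReal (M * C^μ * s ^ ((β-1)*μ)) := by
        have h1 : (0:ℝ) ≤ C * s ^ (β-1) := mul_nonneg hC0 (Real.rpow_nonneg hs0.le _)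
        calc phiE (y s) ≤ phiE (ENNReal.ofReal (C * s ^ (β-1))) := hphiE_mono (hyC s hsIoc)
          _ = ENNReal.ofReal (φ (C * s ^ (β-1))) := hphiE_ofReal _ h1
          _ ≤ ENNReal.ofReal (M * (C * s ^ (β-1)) ^ μ) :=
              ENNReal.ofReal_le_ofReal (hφM _ h1)
          _ = ENNReal.ofReal (M * C^μ * s ^ ((β-1)*μ)) := by
              rw [Real.mul_rpow hC0 (Real.rpow_nonneg hs0.le _),
                ← Real.rpow_mul hs0.le]
              ring_nf
      -- bound on GE y s
      have hGEb : GE y s ≤ ENNReal.ofReal ((M*Cl*C^μ + Ck) * s ^ (2*β - 1 - 1/p)) := by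
        have hterm1 : ENNReal.ofReal (s ^ β * l s) * phiE (y s) ≤
            ENNReal.ofReal (M*Cl*C^μ * s ^ (2*β - 1 - 1/p)) := by
          calc ENNReal.ofReal (s ^ β * l s) * phiE (y s)
              ≤ ENNReal.ofReal (s ^ β * (Cl * s ^ (-((1-μ)*(1-β)) - 1/p))) *
                ENNReal.ofReal (M * C^μ * s ^ ((β-1)*μ)) := by
                refine mul_le_mul' (ENNReal.ofReal_le_ofReal ?_) hphi_le
                exact mul_le_mul_of_nonneg_left (hCl s hsIoc) hsβ
            _ = ENNReal.ofReal ((s ^ β * (Cl * s ^ (-((1-μ)*(1-β)) - 1/p))) *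
                (M * C^μ * s ^ ((β-1)*μ))) :=
                (ENNReal.ofReal_mul (mul_nonneg hsβ
                  (mul_nonneg hCl0 (Real.rpow_nonneg hs0.le _)))).symm
            _ = ENNReal.ofReal (M*Cl*C^μ * s ^ (2*β - 1 - 1/p)) := by
                congr 1
                rw [show s ^ (2*β - 1 - 1/p) =
                    s ^ (β + (-((1-μ)*(1-β)) - 1/p) + (β-1)*μ) from by ring_nf,
                  Real.rpow_add hs0, Real.rpow_add hs0]
                ring
        have hterm2 : ENNReal.ofReal (s ^ β * k s) ≤
            ENNReal.ofReal (Ck * s ^ (2*β - 1 - 1/p)) := by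
          refine ENNReal.ofReal_le_ofReal ?_
          calc s ^ β * k s ≤ s ^ β * (Ck * s ^ (β - 1 - 1/p)) :=
                mul_le_mul_of_nonneg_left (hCk s hsIoc) hsβ
            _ = Ck * s ^ (2*β - 1 - 1/p) := by
                rw [show s ^ (2*β - 1 - 1/p) = s ^ (β + (β - 1 - 1/p)) from by ring_nf,
                  Real.rpow_add hs0]
                ring
        calc GE y s ≤ ENNReal.ofReal (M*Cl*C^μ * s ^ (2*β - 1 - 1/p)) +
              ENNReal.ofReal (Ck * s ^ (2*β - 1 - 1/p)) := by
              simp only [hGE_def]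
              exact add_le_add hterm1 hterm2
          _ = ENNReal.ofReal ((M*Cl*C^μ + Ck) * s ^ (2*β - 1 - 1/p)) := by
              rw [← ENNReal.ofReal_add (mul_nonneg (mul_nonneg (mul_nonneg hM hCl0)
                  (Real.rpow_nonneg hC0 μ)) (Real.rpow_nonneg hs0.le _))
                (mul_nonneg hCk0 (Real.rpow_nonneg hs0.le _))]
              congr 1
              ring
      -- combine with the weight
      have hwnn : (0:ℝ) ≤ (1-τ) ^ (β-1) * τ ^ (-β) :=
        mul_nonneg (Real.rpow_nonneg (by linarith) _) (Real.rpow_nonneg hτ0.le _)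
      calc wW τ * GE y s ≤ wW τ *
            ENNReal.ofReal ((M*Cl*C^μ + Ck) * s ^ (2*β - 1 - 1/p)) :=
            mul_le_mul' le_rfl hGEb
        _ = ENNReal.ofReal (((1-τ) ^ (β-1) * τ ^ (-β)) *
            ((M*Cl*C^μ + Ck) * s ^ (2*β - 1 - 1/p))) := by
            simp only [hwW_def]
            rw [← ENNReal.ofReal_mul hwnn]
        _ = ENNReal.ofReal ((M*Cl*C^μ + Ck) * t ^ (2*β - 1 - 1/p)) *
            ENNReal.ofReal ((1-τ) ^ (β-1) * τ ^ ((2*β - 1 - 1/p) - β)) := by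
            rw [← ENNReal.ofReal_mul (mul_nonneg hA0 htγ)]
            congr 1
            rw [hs_def, Real.mul_rpow ht0.le hτ0.le,
              show τ ^ ((2*β - 1 - 1/p) - β) = τ ^ (-β + (2*β - 1 - 1/p)) from by ring_nf,
              Real.rpow_add hτ0]
            ring
    calc (∫⁻ τ in Ioo (0:ℝ) 1, wW τ * GE y (t * τ))
        ≤ ∫⁻ τ in Ioo (0:ℝ) 1, ENNReal.ofReal ((M*Cl*C^μ + Ck) * t ^ (2*β - 1 - 1/p)) *
            ENNReal.ofReal ((1-τ) ^ (β-1) * τ ^ ((2*β - 1 - 1/p) - β)) := by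
          refine lintegral_mono_ae ?_
          filter_upwards [ae_restrict_mem measurableSet_Ioo] with τ hτ
          exact hpoint τ hτ
      _ = ENNReal.ofReal ((M*Cl*C^μ + Ck) * t ^ (2*β - 1 - 1/p)) * J := by
          rw [lintegral_const_mul' _ _ ENNReal.ofReal_ne_top, ← hJ_def]
      _ = ENNReal.ofReal ((M*Cl*C^μ + Ck) * t ^ (2*β - 1 - 1/p) * Jr) := by
          rw [hJ_eq, ← ENNReal.ofReal_mul (mul_nonneg hA0 htγ)]
  -- supersolutions
  have hsup : ∀ T : ℝ, 1 ≤ T → ∃ C : ℝ, 1 ≤ C ∧ ∀ t ∈ Ioc (0:ℝ) T,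
      Fop (fun s => ENNReal.ofReal (C * s ^ (β-1))) t ≤ ENNReal.ofReal (C * t ^ (β-1)) := by
    intro T hT
    have hT0 : (0:ℝ) < T := lt_of_lt_of_le one_pos hT
    have hT1β : (1:ℝ) ≤ T ^ (1-β) := Real.one_le_rpow hT (by linarith)
    set B : ℝ := (1/Real.Gamma β) * ((M*Cl + Ck) * Jr) * T ^ (1-β) with hB_def
    have hB0 : 0 ≤ B := by
      have h1 : (0:ℝ) ≤ (M*Cl + Ck) * Jr :=
        mul_nonneg (by nlinarith [mul_nonneg hM hCl0]) hJr0
      have h2 : (0:ℝ) ≤ 1/Real.Gamma β := by positivity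
      have h3 : (0:ℝ) ≤ T ^ (1-β) := by linarith
      exact mul_nonneg (mul_nonneg h2 h1) h3
    set C : ℝ := max 1 ((x₀ + B) ^ (1/(1-μ))) with hC_def
    have hC1 : 1 ≤ C := le_max_left _ _
    have hC0 : (0:ℝ) ≤ C := by linarith
    have hCpos : (0:ℝ) < C := by linarith
    have hCμ1 : 1 ≤ C ^ μ := Real.one_le_rpow hC1 hμ0
    have hCμ0 : (0:ℝ) ≤ C ^ μ := by linarith
    have hxB0 : (0:ℝ) ≤ x₀ + B := by linarith
    have hkey : x₀ + B * C ^ μ ≤ C := by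
      have h1 : x₀ + B ≤ C ^ (1-μ) := by
        have hexp : ((x₀ + B) ^ (1/(1-μ))) ^ (1-μ) = x₀ + B := by
          rw [← Real.rpow_mul hxB0, one_div_mul_cancel (by linarith : (1:ℝ)-μ ≠ 0),
            Real.rpow_one]
        rcases max_cases 1 ((x₀ + B) ^ (1/(1-μ))) with ⟨hCe, hge⟩ | ⟨hCe, hge⟩
        · have hCeq : C = 1 := by rw [hC_def]; exact hCe
          calc x₀ + B = ((x₀ + B) ^ (1/(1-μ))) ^ (1-μ) := hexp.symm
            _ ≤ 1 ^ (1-μ) := Real.rpow_le_rpow (Real.rpow_nonneg hxB0 _) hge (by linarith)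
            _ = C ^ (1-μ) := by rw [hCeq]
        · have hCeq : C = (x₀ + B) ^ (1/(1-μ)) := by rw [hC_def]; exact hCe
          rw [hCeq, hexp]
      have h2 : (x₀ + B) * C ^ μ ≤ C ^ (1-μ) * C ^ μ :=
        mul_le_mul_of_nonneg_right h1 hCμ0
      have h3 : C ^ (1-μ) * C ^ μ = C := by
        rw [← Real.rpow_add hCpos]
        norm_num
      nlinarith
    refine ⟨C, hC1, ?_⟩
    intro t htT
    have ht0 : (0:ℝ) < t := htT.1
    have htβ1 : (0:ℝ) < t ^ (β-1) := Real.rpow_pos_of_pos ht0 _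
    have hAC : M*Cl*C^μ + Ck ≤ (M*Cl + Ck) * C ^ μ := by
      nlinarith [mul_nonneg hM hCl0]
    have hAC0 : (0:ℝ) ≤ M*Cl*C^μ + Ck := by
      nlinarith [mul_nonneg (mul_nonneg hM hCl0) hCμ0]
    have hΓi0 : (0:ℝ) ≤ 1/Real.Gamma β := by positivity
    have hE0 : (0:ℝ) ≤ (1/Real.Gamma β) * ((M*Cl + Ck) * Jr) := by
      have h1 : (0:ℝ) ≤ (M*Cl + Ck) * Jr :=
        mul_nonneg (by nlinarith [mul_nonneg hM hCl0]) hJr0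
      exact mul_nonneg hΓi0 h1
    have hD0 : (0:ℝ) ≤ (1/Real.Gamma β) * ((M*Cl*C^μ + Ck) * Jr) :=
      mul_nonneg hΓi0 (mul_nonneg hAC0 hJr0)
    have hBE : B = (1/Real.Gamma β) * ((M*Cl + Ck) * Jr) * T ^ (1-β) := hB_def
    have hDE : (1/Real.Gamma β) * ((M*Cl*C^μ + Ck) * Jr) ≤
        (1/Real.Gamma β) * ((M*Cl + Ck) * Jr) * C ^ μ := by
      have := mul_le_mul_of_nonneg_right hAC hJr0
      nlinarith [hΓi0]
    have hassemble : ∀ R : ℝ, 0 ≤ R →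
        (∫⁻ τ in Ioo (0:ℝ) 1, wW τ * GE (fun s => ENNReal.ofReal (C * s ^ (β-1))) (t*τ))
          ≤ ENNReal.ofReal R →
        x₀ * t ^ (β-1) + (1/Real.Gamma β) * R ≤ C * t ^ (β-1) →
        Fop (fun s => ENNReal.ofReal (C * s ^ (β-1))) t ≤ ENNReal.ofReal (C * t ^ (β-1)) := by
      intro R hR0 hIb hreal
      simp only [hFop_def, if_pos ht0]
      rw [hrep (fun s => ENNReal.ofReal (C * s ^ (β-1))) t ht0]
      calc ENNReal.ofReal (x₀ * t ^ (β-1)) + ENNReal.ofReal (1/Real.Gamma β) *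
            (∫⁻ τ in Ioo (0:ℝ) 1, wW τ * GE (fun s => ENNReal.ofReal (C * s ^ (β-1))) (t*τ))
          ≤ ENNReal.ofReal (x₀ * t ^ (β-1)) + ENNReal.ofReal (1/Real.Gamma β) *
            ENNReal.ofReal R := add_le_add le_rfl (mul_le_mul' le_rfl hIb)
        _ = ENNReal.ofReal (x₀ * t ^ (β-1) + (1/Real.Gamma β) * R) := by
            rw [← ENNReal.ofReal_mul hΓi0, ← ENNReal.ofReal_add
              (mul_nonneg hx₀.le htβ1.le) (mul_nonneg hΓi0 hR0)]
        _ ≤ ENNReal.ofReal (C * t ^ (β-1)) := ENNReal.ofReal_le_ofReal hreal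
    rcases le_or_gt t 1 with h1 | h1
    · -- small time
      have htγ0 : (0:ℝ) ≤ t ^ (2*β - 1 - 1/p) := Real.rpow_nonneg ht0.le _
      refine hassemble ((M*Cl*C^μ + Ck) * t ^ (2*β - 1 - 1/p) * Jr)
        (mul_nonneg (mul_nonneg hAC0 htγ0) hJr0)
        (hboundLem (fun s => ENNReal.ofReal (C * s ^ (β-1))) C hC0
          (fun s _ => le_rfl) t ⟨ht0, h1⟩) ?_
      have he : t ^ (2*β - 1 - 1/p) = t ^ (β-1) * t ^ (β - 1/p) := by
        rw [← Real.rpow_add ht0]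
        ring_nf
      have he2 : t ^ (β - 1/p) ≤ 1 := Real.rpow_le_one ht0.le h1 (by linarith)
      have he3 : (0:ℝ) ≤ t ^ (β - 1/p) := Real.rpow_nonneg ht0.le _
      have hBC : (1/Real.Gamma β) * ((M*Cl*C^μ + Ck) * Jr) ≤ B * C ^ μ := by
        rw [hBE]
        nlinarith [hDE, hE0, hCμ0]
      have key1 : (1/Real.Gamma β) * ((M*Cl*C^μ + Ck) * t ^ (2*β - 1 - 1/p) * Jr) =
          ((1/Real.Gamma β) * ((M*Cl*C^μ + Ck) * Jr)) * (t ^ (β-1) * t ^ (β - 1/p)) := by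
        rw [he]
        ring
      have h7 : t ^ (β-1) * t ^ (β - 1/p) ≤ t ^ (β-1) := by
        nlinarith [htβ1, he2, he3]
      have key2 : ((1/Real.Gamma β) * ((M*Cl*C^μ + Ck) * Jr)) * (t ^ (β-1) * t ^ (β - 1/p))
          ≤ (B * C ^ μ) * t ^ (β-1) :=
        mul_le_mul hBC h7 (mul_nonneg htβ1.le he3) (mul_nonneg hB0 hCμ0)
      rw [key1]
      nlinarith [mul_le_mul_of_nonneg_right hkey htβ1.le, key2]
    · -- large time
      have hwanti : AntitoneOn (fun s : ℝ => ENNReal.ofReal (C * s ^ (β-1))) (Ioi 0) := by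
        intro s₁ hs₁ s₂ hs₂ h12
        exact ENNReal.ofReal_le_ofReal (mul_le_mul_of_nonneg_left
          (Real.rpow_le_rpow_of_nonpos hs₁ h12 (by linarith)) hC0)
      have hanti_int : (∫⁻ τ in Ioo (0:ℝ) 1,
            wW τ * GE (fun s => ENNReal.ofReal (C * s ^ (β-1))) (t*τ))
          ≤ ∫⁻ τ in Ioo (0:ℝ) 1,
            wW τ * GE (fun s => ENNReal.ofReal (C * s ^ (β-1))) (1*τ) := by
        refine lintegral_mono_ae ?_
        filter_upwards [ae_restrict_mem measurableSet_Ioo] with τ hτ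
        refine mul_le_mul' le_rfl ?_
        exact hGE_anti _ hwanti (mem_Ioi.2 (by nlinarith [hτ.1]))
          (mem_Ioi.2 (mul_pos ht0 hτ.1))
          (by nlinarith [hτ.1, hτ.2])
      have h2 := hboundLem (fun s => ENNReal.ofReal (C * s ^ (β-1))) C hC0
        (fun s _ => le_rfl) 1 ⟨one_pos, le_rfl⟩
      rw [Real.one_rpow, mul_one] at h2
      have h2' : (∫⁻ τ in Ioo (0:ℝ) 1,
            wW τ * GE (fun s => ENNReal.ofReal (C * s ^ (β-1))) (1*τ))
          ≤ ENNReal.ofReal ((M*Cl*C^μ + Ck) * Jr) := h2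
      refine hassemble ((M*Cl*C^μ + Ck) * Jr) (mul_nonneg hAC0 hJr0)
        (le_trans hanti_int h2') ?_
      have ht1β : t ^ (1-β) ≤ T ^ (1-β) :=
        Real.rpow_le_rpow ht0.le htT.2 (by linarith)
      have ht1β0 : (0:ℝ) ≤ t ^ (1-β) := Real.rpow_nonneg ht0.le _
      have hinv : t ^ (1-β) * t ^ (β-1) = 1 := by
        rw [← Real.rpow_add ht0]
        norm_num
      have hD : x₀ + (1/Real.Gamma β) * ((M*Cl*C^μ + Ck) * Jr) * t ^ (1-β) ≤ C := by
        have h7 : (1/Real.Gamma β) * ((M*Cl*C^μ + Ck) * Jr) * t ^ (1-β) ≤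
            ((1/Real.Gamma β) * ((M*Cl + Ck) * Jr) * C ^ μ) * T ^ (1-β) :=
          mul_le_mul hDE ht1β ht1β0 (mul_nonneg hE0 hCμ0)
        have h8 : ((1/Real.Gamma β) * ((M*Cl + Ck) * Jr) * C ^ μ) * T ^ (1-β) = B * C ^ μ := by
          rw [hBE]
          ring
        rw [h8] at h7
        linarith [hkey]
      have h9 := mul_le_mul_of_nonneg_right hD htβ1.le
      have h10 : x₀ * t ^ (β-1) + (1/Real.Gamma β) * ((M*Cl*C^μ + Ck) * Jr) =
          (x₀ + (1/Real.Gamma β) * ((M*Cl*C^μ + Ck) * Jr) * t ^ (1-β)) * t ^ (β-1) := by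
        have h11 : (x₀ + (1/Real.Gamma β) * ((M*Cl*C^μ + Ck) * Jr) * t ^ (1-β)) * t ^ (β-1) =
            x₀ * t ^ (β-1) + (1/Real.Gamma β) * ((M*Cl*C^μ + Ck) * Jr) *
              (t ^ (1-β) * t ^ (β-1)) := by
          ring
        rw [h11, hinv, mul_one]
      rw [h10]
      exact h9
  -- the least fixed point
  set SS : Set (ℝ → ℝ≥0∞) := {w | ∀ t, Fop w t ≤ w t} with hSS_def
  set xE : ℝ → ℝ≥0∞ := fun t => ⨅ (w : ℝ → ℝ≥0∞) (_ : w ∈ SS), w t with hxE_def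
  have hxE_le : ∀ w ∈ SS, ∀ t, xE t ≤ w t := by
    intro w hw t
    exact iInf₂_le w hw
  have hpre : ∀ t, Fop xE t ≤ xE t := by
    intro t
    refine le_iInf₂ fun w hw => ?_
    exact le_trans (hmono xE w (fun s => hxE_le w hw s) t) (hw t)
  have hfix : ∀ t, Fop xE t = xE t := by
    intro t
    refine le_antisymm (hpre t) ?_
    exact hxE_le (Fop xE) (fun t' => hmono _ _ hpre t') t
  -- comparison with the supersolutions
  have hcomp : ∀ T : ℝ, 1 ≤ T → ∃ C : ℝ, 1 ≤ C ∧ ∀ t ∈ Ioc (0:ℝ) T,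
      xE t ≤ ENNReal.ofReal (C * t ^ (β-1)) := by
    intro T hT
    obtain ⟨C, hC1, hC⟩ := hsup T hT
    refine ⟨C, hC1, ?_⟩
    set v : ℝ → ℝ≥0∞ := fun t => if t ≤ T then xE t ⊓ ENNReal.ofReal (C * t ^ (β-1))
      else xE t with hv_def
    have hvle : ∀ s, v s ≤ xE s := by
      intro s
      simp only [hv_def]
      split
      · exact inf_le_left
      · exact le_rfl
    have hvS : ∀ t, Fop v t ≤ v t := by
      intro t
      by_cases ht0 : 0 < t
      · by_cases htT : t ≤ T
        · have h1 : Fop v t ≤ xE t := le_trans (hmono v xE hvle t) (hfix t).le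
          have h2 : Fop v t ≤ ENNReal.ofReal (C * t ^ (β-1)) := by
            refine le_trans (hmono_causal v (fun s => ENNReal.ofReal (C * s ^ (β-1))) t ?_)
              (hC t ⟨ht0, htT⟩)
            intro s hs
            have hsT : s ≤ T := le_trans hs.2.le htT
            simp only [hv_def, if_pos hsT]
            exact inf_le_right
          simp only [hv_def, if_pos htT]
          exact le_inf h1 h2
        · simp only [hv_def, if_neg htT]
          exact le_trans (hmono v xE hvle t) (hfix t).le
      · simp only [hFop_def, if_neg ht0]
        exact zero_le
    intro t htT
    have h3 := hxE_le v hvS t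
    simp only [hv_def, if_pos htT.2] at h3
    exact le_trans h3 inf_le_right
  have hfin : ∀ t : ℝ, 0 < t → xE t ≠ ⊤ := by
    intro t ht
    obtain ⟨C, hC1, hC⟩ := hcomp (max t 1) (le_max_right _ _)
    exact ne_top_of_le_ne_top ENNReal.ofReal_ne_top
      (hC t ⟨ht, le_max_left _ _⟩)
  -- antitonicity of the fixed point
  have hanti : AntitoneOn xE (Ioi 0) := by
    set xT : ℝ → ℝ≥0∞ := fun t => ⨅ (t' : ℝ) (_ : t' ∈ Ioc (0:ℝ) t), xE t' with hxT_def
    have hxT_anti : AntitoneOn xT (Ioi 0) := by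
      intro t₁ h₁ t₂ h₂ h12
      refine le_iInf₂ fun t' ht' => ?_
      exact iInf₂_le t' ⟨ht'.1, le_trans ht'.2 h12⟩
    have hxT_le : ∀ s, 0 < s → xT s ≤ xE s := fun s hs => iInf₂_le s ⟨hs, le_rfl⟩
    have hxTS : ∀ t, Fop xT t ≤ xT t := by
      intro t
      by_cases ht0 : 0 < t
      · refine le_iInf₂ fun t' ht' => ?_
        have h1 : Fop xT t ≤ Fop xT t' :=
          hFanti xT hxT_anti (mem_Ioi.2 ht'.1) (mem_Ioi.2 ht0) ht'.2
        have h2 : Fop xT t' ≤ Fop xE t' :=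
          hmono_causal xT xE t' (fun s hs => hxT_le s hs.1)
        exact le_trans h1 (le_trans h2 (hfix t').le)
      · simp only [hFop_def, if_neg ht0]
        exact zero_le
    have hle : ∀ t, xE t ≤ xT t := fun t => hxE_le xT hxTS t
    intro t₁ h₁ t₂ h₂ h12
    exact le_trans (hle t₂) (iInf₂_le t₁ ⟨h₁, h12⟩)
  -- the real solution
  set x : ℝ → ℝ := fun t => (xE t).toReal with hx_def
  set Ψ : ℝ → ℝ≥0∞ := fun t => ∫⁻ τ in Ioo (0:ℝ) 1, wW τ * GE xE (t * τ) with hΨ_def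
  have hxE_eq : ∀ t : ℝ, 0 < t →
      xE t = ENNReal.ofReal (x₀ * t ^ (β-1)) + ENNReal.ofReal (1 / Real.Gamma β) * Ψ t := by
    intro t ht
    rw [← hfix t]
    simp only [hFop_def, if_pos ht, hrep xE t ht, hΨ_def]
  have hΨfin : ∀ t : ℝ, 0 < t → Ψ t ≠ ⊤ := by
    intro t ht
    intro htop
    apply hfin t ht
    have h0 : ENNReal.ofReal (1 / Real.Gamma β) ≠ 0 := by
      simp only [ne_eq, ENNReal.ofReal_eq_zero, not_le]
      positivity
    rw [hxE_eq t ht, htop, ENNReal.mul_top h0]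
    exact ENNReal.add_eq_top.mpr (Or.inr rfl)
  have hΨanti : ∀ t₁ t₂ : ℝ, 0 < t₁ → t₁ ≤ t₂ → Ψ t₂ ≤ Ψ t₁ := by
    intro t₁ t₂ ht₁ h12
    simp only [hΨ_def]
    refine lintegral_mono_ae ?_
    filter_upwards [ae_restrict_mem measurableSet_Ioo] with τ hτ
    refine mul_le_mul' le_rfl ?_
    exact hGE_anti xE hanti (mem_Ioi.2 (mul_pos ht₁ hτ.1))
      (mem_Ioi.2 (mul_pos (lt_of_lt_of_le ht₁ h12) hτ.1))
      (mul_le_mul_of_nonneg_right h12 hτ.1.le)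
  have hx_eq : ∀ t : ℝ, 0 < t → x t = x₀ * t ^ (β-1) + (1 / Real.Gamma β) * (Ψ t).toReal := by
    intro t ht
    rw [hx_def]
    simp only
    rw [hxE_eq t ht, ENNReal.toReal_add ENNReal.ofReal_ne_top
      (ENNReal.mul_ne_top ENNReal.ofReal_ne_top (hΨfin t ht)), ENNReal.toReal_mul,
      ENNReal.toReal_ofReal (by positivity : (0:ℝ) ≤ x₀ * t ^ (β-1)),
      ENNReal.toReal_ofReal (by positivity : (0:ℝ) ≤ 1 / Real.Gamma β)]
  have hx_nonneg : ∀ t ∈ Ioi (0:ℝ), 0 ≤ x t := fun t _ => ENNReal.toReal_nonneg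
  have hx_anti : AntitoneOn x (Ioi 0) := by
    intro t₁ ht₁ t₂ ht₂ h12
    exact ENNReal.toReal_mono (hfin t₁ ht₁) (hanti ht₁ ht₂ h12)
  -- the real kernel
  set Gr : ℝ → ℝ := fun s => s ^ β * (l s * φ (x s) + k s) with hGr_def
  have hGr_nonneg : ∀ s ∈ Ioi (0:ℝ), 0 ≤ Gr s := by
    intro s hs
    have h1 := hl_nonneg s hs
    have h2 := hk_nonneg s hs
    have h3 := hφ0 (x s) (hx_nonneg s hs)
    have h4 : (0:ℝ) ≤ s ^ β := (Real.rpow_pos_of_pos hs β).le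
    positivity
  have hGE_Gr : ∀ s : ℝ, 0 < s → GE xE s = ENNReal.ofReal (Gr s) := by
    intro s hs
    have hxEs : xE s ≠ ⊤ := hfin s hs
    have hphi : phiE (xE s) = ENNReal.ofReal (φ (x s)) := by
      simp only [hphiE_def, hxEs, if_false]
      rfl
    have hsβ : (0:ℝ) ≤ s ^ β := (Real.rpow_pos_of_pos hs β).le
    have h1 : (0:ℝ) ≤ s ^ β * l s * φ (x s) :=
      mul_nonneg (mul_nonneg hsβ (hl_nonneg s hs)) (hφ0 (x s) (hx_nonneg s hs))
    have h2 : (0:ℝ) ≤ s ^ β * k s := mul_nonneg hsβ (hk_nonneg s hs)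
    simp only [hGE_def, hGr_def, hphi]
    rw [← ENNReal.ofReal_mul (mul_nonneg hsβ (hl_nonneg s hs)), ← ENNReal.ofReal_add h1 h2]
    congr 1
    ring
  have hGr_anti : AntitoneOn Gr (Ioi 0) := by
    have he : ∀ s : ℝ, Gr s = (s ^ β * l s) * φ (x s) + s ^ β * k s := by
      intro s
      simp only [hGr_def]
      ring
    intro s₁ hs₁ s₂ hs₂ h12
    rw [he s₁, he s₂]
    refine add_le_add ?_ (hkmono hs₁ hs₂ h12)
    refine mul_le_mul (hlmono hs₁ hs₂ h12) ?_ (hφ0 (x s₂) (hx_nonneg s₂ hs₂)) (hl0 s₁ hs₁)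
    exact hφmono (hx_nonneg s₂ hs₂) (hx_nonneg s₁ hs₁) (hx_anti hs₁ hs₂ h12)
  set Wr : ℝ → ℝ := fun τ => (1 - τ) ^ (β-1) * τ ^ (-β) with hWr_def
  have hWr_nonneg : ∀ τ ∈ Ioo (0:ℝ) 1, 0 ≤ Wr τ := by
    intro τ hτ
    have h1 : (0:ℝ) ≤ (1 - τ) ^ (β-1) := Real.rpow_nonneg (by linarith [hτ.2]) _
    have h2 : (0:ℝ) ≤ τ ^ (-β) := Real.rpow_nonneg hτ.1.le _
    positivity
  -- measurability infrastructure
  have hGrm : ∀ t : ℝ, 0 < t →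
      AEMeasurable (fun τ => Gr (t*τ)) (volume.restrict (Ioo (0:ℝ) 1)) := by
    intro t ht
    refine aemeasurable_restrict_of_antitoneOn measurableSet_Ioo ?_
    intro τ₁ h₁ τ₂ h₂ h12
    exact hGr_anti (mem_Ioi.2 (mul_pos ht h₁.1)) (mem_Ioi.2 (mul_pos ht h₂.1))
      (mul_le_mul_of_nonneg_left h12 ht.le)
  have hWrcont : ContinuousOn Wr (Ioo (0:ℝ) 1) := by
    rw [hWr_def]
    refine ContinuousOn.mul ?_ ?_
    · refine ContinuousOn.rpow_const ((continuous_const.sub continuous_id).continuousOn) ?_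
      intro τ hτ
      exact Or.inl (ne_of_gt (by linarith [hτ.2] : (0:ℝ) < 1 - τ))
    · exact continuousOn_id.rpow_const fun τ hτ => Or.inl (ne_of_gt hτ.1)
  have haesmWG : ∀ t : ℝ, 0 < t → AEStronglyMeasurable (fun τ => Wr τ * Gr (t*τ))
      (volume.restrict (Ioo (0:ℝ) 1)) := fun t ht =>
    ((hWrcont.aemeasurable measurableSet_Ioo).mul (hGrm t ht)).aestronglyMeasurable
  have hnnWG : ∀ t : ℝ, 0 < t →
      0 ≤ᵐ[volume.restrict (Ioo (0:ℝ) 1)] fun τ => Wr τ * Gr (t*τ) := by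
    intro t ht
    filter_upwards [ae_restrict_mem measurableSet_Ioo] with τ hτ
    exact mul_nonneg (hWr_nonneg τ hτ) (hGr_nonneg _ (mem_Ioi.2 (mul_pos ht hτ.1)))
  have hΨofReal : ∀ t : ℝ, 0 < t →
      Ψ t = ∫⁻ τ in Ioo (0:ℝ) 1, ENNReal.ofReal (Wr τ * Gr (t*τ)) := by
    intro t ht
    simp only [hΨ_def]
    refine lintegral_congr_ae ?_
    filter_upwards [ae_restrict_mem measurableSet_Ioo] with τ hτ
    rw [hGE_Gr _ (mul_pos ht hτ.1)]
    exact (ENNReal.ofReal_mul (hWr_nonneg τ hτ)).symm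
  have hΨr : ∀ t : ℝ, 0 < t →
      (Ψ t).toReal = ∫ τ in Ioo (0:ℝ) 1, Wr τ * Gr (t * τ) := by
    intro t ht
    rw [hΨofReal t ht, MeasureTheory.integral_eq_lintegral_of_nonneg_ae (hnnWG t ht)
      (haesmWG t ht)]
  have hdom : ∀ a : ℝ, 0 < a →
      Integrable (fun τ => Wr τ * Gr (a*τ)) (volume.restrict (Ioo (0:ℝ) 1)) := by
    intro a ha
    refine ⟨haesmWG a ha, ?_⟩
    rw [hasFiniteIntegral_iff_ofReal (hnnWG a ha), ← hΨofReal a ha]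
    exact lt_of_le_of_ne le_top (hΨfin a ha)
  -- continuity of the integral term
  have hIcont : ∀ t₀ : ℝ, 0 < t₀ →
      ContinuousAt (fun t => ∫ τ in Ioo (0:ℝ) 1, Wr τ * Gr (t * τ)) t₀ := by
    intro t₀ ht₀
    obtain ⟨D, hDc, hD⟩ := cont_off_ctbl Gr hGr_anti
    have ha2 : (0:ℝ) < t₀/2 := by linarith
    have key : Tendsto (fun t => ∫ τ in Ioo (0:ℝ) 1, Wr τ * Gr (t*τ)) (nhds t₀)
        (nhds (∫ τ in Ioo (0:ℝ) 1, Wr τ * Gr (t₀*τ))) := by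
      refine tendsto_integral_filter_of_dominated_convergence
        (fun τ => Wr τ * Gr ((t₀/2)*τ)) ?_ ?_ (hdom _ ha2) ?_
      · filter_upwards [Ioi_mem_nhds ht₀] with t ht
        exact haesmWG t ht
      · have hmem : Ici (t₀/2) ∈ nhds t₀ := Ici_mem_nhds (by linarith)
        filter_upwards [hmem, Ioi_mem_nhds ht₀] with t hta ht0'
        filter_upwards [ae_restrict_mem measurableSet_Ioo] with τ hτ
        have h1 : 0 ≤ Wr τ := hWr_nonneg τ hτ
        have h2 : Gr (t*τ) ≤ Gr ((t₀/2)*τ) :=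
          hGr_anti (mem_Ioi.2 (mul_pos ha2 hτ.1)) (mem_Ioi.2 (mul_pos ht0' hτ.1))
            (mul_le_mul_of_nonneg_right hta hτ.1.le)
        have h3 : 0 ≤ Gr (t*τ) := hGr_nonneg _ (mem_Ioi.2 (mul_pos ht0' hτ.1))
        rw [Real.norm_of_nonneg (mul_nonneg h1 h3)]
        exact mul_le_mul_of_nonneg_left h2 h1
      · have hc : ((fun τ : ℝ => t₀*τ) ⁻¹' D).Countable :=
          hDc.preimage (mul_right_injective₀ (ne_of_gt ht₀))
        have hae : ∀ᵐ τ ∂(volume.restrict (Ioo (0:ℝ) 1)),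
            τ ∉ (fun τ : ℝ => t₀*τ) ⁻¹' D :=
          ae_restrict_of_ae (measure_eq_zero_iff_ae_notMem.mp (hc.measure_zero _))
        filter_upwards [hae, ae_restrict_mem measurableSet_Ioo] with τ hτD hτ
        have hc1 : ContinuousAt Gr (t₀*τ) := hD _ (mem_Ioi.2 (mul_pos ht₀ hτ.1)) hτD
        have hc2 : Tendsto (fun t => Gr (t*τ)) (nhds t₀) (nhds (Gr (t₀*τ))) :=
          hc1.tendsto.comp ((continuous_mul_right τ).tendsto t₀)
        exact hc2.const_mul (Wr τ)
    exact key
  have hxcont : ContinuousOn x (Ioi 0) := by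
    intro t ht
    have ht' : (0:ℝ) < t := ht
    have hrpow : ContinuousAt (fun u : ℝ => u ^ (β-1)) t :=
      Real.continuousAt_rpow_const t (β-1) (Or.inl (ne_of_gt ht'))
    have h1 : ContinuousAt (fun u : ℝ => x₀ * u ^ (β-1) +
        (1/Real.Gamma β) * ∫ τ in Ioo (0:ℝ) 1, Wr τ * Gr (u*τ)) t :=
      (continuousAt_const.mul hrpow).add (continuousAt_const.mul (hIcont t ht'))
    refine (h1.congr ?_).continuousWithinAt
    filter_upwards [Ioi_mem_nhds ht'] with y hy
    rw [hx_eq y hy, hΨr y hy]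
  -- upper bound for the weighted solution near 0
  obtain ⟨C₁, hC₁1, hC₁⟩ := hcomp 1 le_rfl
  have hΨbound : ∀ t ∈ Ioc (0:ℝ) 1,
      (Ψ t).toReal ≤ (M*Cl*C₁^μ + Ck) * t ^ (2*β - 1 - 1/p) * Jr := by
    intro t ht
    refine ENNReal.toReal_le_of_le_ofReal ?_ ?_
    · have h1 : (0:ℝ) ≤ t ^ (2*β - 1 - 1/p) := Real.rpow_nonneg ht.1.le _
      have h2 : (0:ℝ) ≤ M*Cl*C₁^μ + Ck := by
        have h3 : (0:ℝ) ≤ C₁ ^ μ := Real.rpow_nonneg (by linarith) μ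
        have h4 : (0:ℝ) ≤ M*Cl*C₁^μ := mul_nonneg (mul_nonneg hM hCl0) h3
        linarith
      exact mul_nonneg (mul_nonneg h2 h1) hJr0
    · exact hboundLem xE C₁ (by linarith) hC₁ t ht
  -- strict antitonicity
  have hx_strict : StrictAntiOn x (Ioi 0) := by
    intro t₁ h₁ t₂ h₂ h12
    have h₁' : (0:ℝ) < t₁ := h₁
    have h₂' : (0:ℝ) < t₂ := h₂
    rw [hx_eq t₁ h₁', hx_eq t₂ h₂']
    have hs : x₀ * t₂ ^ (β-1) < x₀ * t₁ ^ (β-1) :=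
      mul_lt_mul_of_pos_left (Real.rpow_lt_rpow_of_neg h₁' h12 (by linarith)) hx₀
    have hψ : (Ψ t₂).toReal ≤ (Ψ t₁).toReal :=
      ENNReal.toReal_mono (hΨfin t₁ h₁') (hΨanti t₁ t₂ h₁' h12.le)
    have h3 := mul_le_mul_of_nonneg_left hψ (by positivity : (0:ℝ) ≤ 1/Real.Gamma β)
    linarith
  -- the extension X
  have hXform : ∀ t : ℝ, 0 < t →
      t ^ (1-β) * x t = x₀ + t ^ (1-β) * ((1/Real.Gamma β) * (Ψ t).toReal) := by
    intro t ht0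
    have hinv : t ^ (1-β) * t ^ (β-1) = 1 := by
      rw [← Real.rpow_add ht0]
      norm_num
    rw [hx_eq t ht0]
    calc t ^ (1-β) * (x₀ * t ^ (β-1) + (1/Real.Gamma β) * (Ψ t).toReal)
        = x₀ * (t ^ (1-β) * t ^ (β-1)) + t ^ (1-β) * ((1/Real.Gamma β) * (Ψ t).toReal) := by
          ring
      _ = x₀ + t ^ (1-β) * ((1/Real.Gamma β) * (Ψ t).toReal) := by rw [hinv, mul_one]
  have hΓi0 : (0:ℝ) ≤ 1/Real.Gamma β := by positivity
  have hX : ∃ X : ℝ → ℝ, ContinuousOn X (Ici 0) ∧ (∀ t ∈ Ici (0:ℝ), 0 ≤ X t) ∧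
      ∀ t ∈ Ioi (0:ℝ), X t = t ^ (1 - β) * x t := by
    set c1 : ℝ := (1/Real.Gamma β) * ((M*Cl*C₁^μ + Ck) * Jr) with hc1_def
    have hAC10 : (0:ℝ) ≤ M*Cl*C₁^μ + Ck := by
      have h3 : (0:ℝ) ≤ C₁ ^ μ := Real.rpow_nonneg (by linarith) μ
      nlinarith [mul_nonneg (mul_nonneg hM hCl0) h3]
    have hc10 : 0 ≤ c1 := mul_nonneg hΓi0 (mul_nonneg hAC10 hJr0)
    refine ⟨fun t => if 0 < t then t ^ (1-β) * x t else x₀, ?_, ?_, ?_⟩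
    · -- continuity on [0, ∞)
      intro t ht
      rcases eq_or_lt_of_le (mem_Ici.mp ht : (0:ℝ) ≤ t) with heq | hpos
      · -- at zero
        subst heq
        have hup : Tendsto (fun t : ℝ => x₀ + c1 * t ^ (β - 1/p))
            (nhdsWithin 0 (Ioi 0)) (nhds x₀) := by
          have h0 : Tendsto (fun t : ℝ => t ^ (β - 1/p)) (nhdsWithin 0 (Ioi 0)) (nhds 0) := by
            have hca := (Real.continuousAt_rpow_const 0 (β - 1/p)
              (Or.inr (by linarith))).tendsto
            rw [Real.zero_rpow (ne_of_gt (by linarith : (0:ℝ) < β - 1/p))] at hca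
            exact hca.mono_left nhdsWithin_le_nhds
          have h1 := h0.const_mul c1
          have h2 := (tendsto_const_nhds (x := x₀)
            (f := nhdsWithin (0:ℝ) (Ioi 0))).add h1
          simpa using h2
        have key : Tendsto (fun t : ℝ => if 0 < t then t ^ (1-β) * x t else x₀)
            (nhdsWithin 0 (Ioi 0)) (nhds x₀) := by
          refine tendsto_of_tendsto_of_tendsto_of_le_of_le' tendsto_const_nhds hup ?_ ?_
          · filter_upwards [Ioc_mem_nhdsGT zero_lt_one] with t htI
            have ht0 : (0:ℝ) < t := htI.1
            rw [if_pos ht0, hXform t ht0]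
            have h4 : 0 ≤ t ^ (1-β) * ((1/Real.Gamma β) * (Ψ t).toReal) :=
              mul_nonneg (Real.rpow_nonneg ht0.le _)
                (mul_nonneg hΓi0 ENNReal.toReal_nonneg)
            linarith
          · filter_upwards [Ioc_mem_nhdsGT zero_lt_one] with t htI
            have ht0 : (0:ℝ) < t := htI.1
            rw [if_pos ht0, hXform t ht0]
            have h1 := hΨbound t htI
            have h2 : t ^ (1-β) * t ^ (2*β - 1 - 1/p) = t ^ (β - 1/p) := by
              rw [← Real.rpow_add ht0]
              ring_nf
            have h5 : t ^ (1-β) * ((1/Real.Gamma β) * (Ψ t).toReal) ≤ c1 * t ^ (β - 1/p) := by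
              calc t ^ (1-β) * ((1/Real.Gamma β) * (Ψ t).toReal)
                  ≤ t ^ (1-β) * ((1/Real.Gamma β) *
                    ((M*Cl*C₁^μ + Ck) * t ^ (2*β - 1 - 1/p) * Jr)) := by
                    refine mul_le_mul_of_nonneg_left ?_ (Real.rpow_nonneg ht0.le _)
                    exact mul_le_mul_of_nonneg_left h1 hΓi0
                _ = c1 * (t ^ (1-β) * t ^ (2*β - 1 - 1/p)) := by
                    rw [hc1_def]
                    ring
                _ = c1 * t ^ (β - 1/p) := by rw [h2]
            linarith
        rw [← Ioi_insert, continuousWithinAt_insert_self]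
        show Tendsto _ _ (nhds (if (0:ℝ) < 0 then (0:ℝ) ^ (1-β) * x 0 else x₀))
        rw [if_neg (lt_irrefl (0:ℝ))]
        exact key
      · -- at positive points
        have hCA : ContinuousAt (fun u : ℝ => u ^ (1-β) * x u) t :=
          (Real.continuousAt_rpow_const t (1-β) (Or.inl (ne_of_gt hpos))).mul
            (hxcont.continuousAt (Ioi_mem_nhds hpos))
        refine (hCA.congr ?_).continuousWithinAt
        filter_upwards [Ioi_mem_nhds hpos] with y hy
        simp only [if_pos (mem_Ioi.mp hy)]
    · intro t _
      by_cases h : 0 < t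
      · simp only [if_pos h]
        exact mul_nonneg (Real.rpow_nonneg h.le _) (hx_nonneg t h)
      · simp only [if_neg h]
        exact hx₀.le
    · intro t ht
      simp only [if_pos (mem_Ioi.mp ht)]
  -- the Volterra equation
  have hVolterra : ∀ t ∈ Ioi (0:ℝ), x t = x₀ * t ^ (β - 1) +
      (1 / Real.Gamma β) * ∫ s in Ioo (0:ℝ) t, (t - s) ^ (β - 1) * (l s * φ (x s) + k s) := by
    intro t ht
    have ht' : (0:ℝ) < t := ht
    have hphiEx : ∀ s : ℝ, 0 < s → phiE (xE s) = ENNReal.ofReal (φ (x s)) := by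
      intro s hs
      simp only [hphiE_def, hfin s hs, if_false]
      rfl
    set L : ℝ≥0∞ := ∫⁻ s in Ioo (0:ℝ) t, ENNReal.ofReal ((t - s) ^ (β - 1)) *
        (ENNReal.ofReal (l s) * phiE (xE s) + ENNReal.ofReal (k s)) with hL_def
    have hLΨ : L = Ψ t := by
      rw [hL_def, hrep xE t ht']
    have hpt : ∀ᵐ s ∂(volume.restrict (Ioo (0:ℝ) t)),
        ENNReal.ofReal ((t - s) ^ (β-1) * (l s * φ (x s) + k s)) =
        ENNReal.ofReal ((t - s) ^ (β-1)) *
          (ENNReal.ofReal (l s) * phiE (xE s) + ENNReal.ofReal (k s)) := by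
      filter_upwards [ae_restrict_mem measurableSet_Ioo] with s hs
      have hs0 : (0:ℝ) < s := hs.1
      have hts : (0:ℝ) ≤ (t - s) ^ (β-1) := Real.rpow_nonneg (by linarith [hs.2]) _
      rw [hphiEx s hs0, ENNReal.ofReal_mul hts,
        ← ENNReal.ofReal_mul (hl_nonneg s hs0),
        ← ENNReal.ofReal_add (mul_nonneg (hl_nonneg s hs0) (hφ0 _ (hx_nonneg s hs0)))
          (hk_nonneg s hs0)]
    have haesm2 : AEStronglyMeasurable (fun s => (t - s) ^ (β-1) * (l s * φ (x s) + k s))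
        (volume.restrict (Ioo (0:ℝ) t)) := by
      have hcont1 : ContinuousOn (fun s : ℝ => (t - s) ^ (β-1) * s ^ (-β)) (Ioo 0 t) := by
        refine ContinuousOn.mul ?_ ?_
        · refine ContinuousOn.rpow_const
            ((continuous_const.sub continuous_id).continuousOn) ?_
          intro s hs
          exact Or.inl (ne_of_gt (by linarith [hs.2] : (0:ℝ) < t - s))
        · exact continuousOn_id.rpow_const fun s hs => Or.inl (ne_of_gt hs.1)
      have hGrm2 : AEMeasurable Gr (volume.restrict (Ioo (0:ℝ) t)) :=
        aemeasurable_restrict_of_antitoneOn measurableSet_Ioo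
          (hGr_anti.mono (fun s hs => hs.1))
      have h2 : AEMeasurable (fun s => ((t - s) ^ (β-1) * s ^ (-β)) * Gr s)
          (volume.restrict (Ioo (0:ℝ) t)) :=
        (hcont1.aemeasurable measurableSet_Ioo).mul hGrm2
      refine (AEMeasurable.congr h2 ?_).aestronglyMeasurable
      filter_upwards [ae_restrict_mem measurableSet_Ioo] with s hs
      have hs0 : (0:ℝ) < s := hs.1
      have hss : s ^ (-β) * s ^ β = 1 := by
        rw [← Real.rpow_add hs0]
        norm_num
      simp only [hGr_def]
      calc ((t - s) ^ (β-1) * s ^ (-β)) * (s ^ β * (l s * φ (x s) + k s))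
          = (t - s) ^ (β-1) * ((s ^ (-β) * s ^ β) * (l s * φ (x s) + k s)) := by ring
        _ = (t - s) ^ (β-1) * (l s * φ (x s) + k s) := by rw [hss, one_mul]
    have hnn2 : 0 ≤ᵐ[volume.restrict (Ioo (0:ℝ) t)]
        fun s => (t - s) ^ (β-1) * (l s * φ (x s) + k s) := by
      filter_upwards [ae_restrict_mem measurableSet_Ioo] with s hs
      have hs0 : (0:ℝ) < s := hs.1
      exact mul_nonneg (Real.rpow_nonneg (by linarith [hs.2]) _)
        (add_nonneg (mul_nonneg (hl_nonneg s hs0) (hφ0 _ (hx_nonneg s hs0)))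
          (hk_nonneg s hs0))
    rw [MeasureTheory.integral_eq_lintegral_of_nonneg_ae hnn2 haesm2]
    have h3 : (∫⁻ s in Ioo (0:ℝ) t,
        ENNReal.ofReal ((t - s) ^ (β-1) * (l s * φ (x s) + k s))) = L := by
      rw [hL_def]
      exact lintegral_congr_ae hpt
    rw [h3, hLΨ, hx_eq t ht']
  -- decay at infinity
  have hdecay : Tendsto x atTop (nhds 0) := by
    have hGrform : ∀ s : ℝ, Gr s = (s ^ β * l s) * φ (x s) + s ^ β * k s := by
      intro s
      simp only [hGr_def]
      ring
    have hGr0 : Tendsto Gr atTop (nhds 0) := by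
      have hup : Tendsto (fun s : ℝ => (s ^ β * l s) * φ (x 1) + s ^ β * k s)
          atTop (nhds 0) := by
        have h1 := ha.mul_const (φ (x 1))
        have h2 := h1.add hb
        simpa using h2
      refine tendsto_of_tendsto_of_tendsto_of_le_of_le' tendsto_const_nhds hup ?_ ?_
      · filter_upwards [eventually_gt_atTop (0:ℝ)] with s hs
        exact hGr_nonneg s hs
      · filter_upwards [eventually_ge_atTop (1:ℝ)] with s hs1
        have hs0 : (0:ℝ) < s := lt_of_lt_of_le one_pos hs1
        rw [hGrform s]
        have h2 : φ (x s) ≤ φ (x 1) :=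
          hφmono (hx_nonneg s hs0) (hx_nonneg 1 (mem_Ioi.2 one_pos))
            (hx_anti (mem_Ioi.2 one_pos) (mem_Ioi.2 hs0) hs1)
        have h3 := mul_le_mul_of_nonneg_left h2 (hl0 s hs0)
        linarith
    have hI0 : Tendsto (fun t => ∫ τ in Ioo (0:ℝ) 1, Wr τ * Gr (t*τ)) atTop (nhds 0) := by
      have key : Tendsto (fun t => ∫ τ in Ioo (0:ℝ) 1, Wr τ * Gr (t*τ)) atTop
          (nhds (∫ _τ in Ioo (0:ℝ) 1, (0:ℝ))) := by
        refine tendsto_integral_filter_of_dominated_convergence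
          (fun τ => Wr τ * Gr (1*τ)) ?_ ?_ (hdom 1 one_pos) ?_
        · filter_upwards [eventually_gt_atTop (0:ℝ)] with t ht
          exact haesmWG t ht
        · filter_upwards [eventually_ge_atTop (1:ℝ)] with t ht1
          have ht0 : (0:ℝ) < t := lt_of_lt_of_le one_pos ht1
          filter_upwards [ae_restrict_mem measurableSet_Ioo] with τ hτ
          have h1 := hWr_nonneg τ hτ
          have h3 : 0 ≤ Gr (t*τ) := hGr_nonneg _ (mem_Ioi.2 (mul_pos ht0 hτ.1))
          rw [Real.norm_of_nonneg (mul_nonneg h1 h3)]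
          refine mul_le_mul_of_nonneg_left ?_ h1
          exact hGr_anti (mem_Ioi.2 (mul_pos one_pos hτ.1))
            (mem_Ioi.2 (mul_pos ht0 hτ.1)) (by nlinarith [hτ.1])
        · filter_upwards [ae_restrict_mem measurableSet_Ioo] with τ hτ
          have h2 : Tendsto (fun t : ℝ => t * τ) atTop atTop :=
            tendsto_id.atTop_mul_const hτ.1
          have h3 := hGr0.comp h2
          have h4 := h3.const_mul (Wr τ)
          simpa using h4
      simpa using key
    have hpow : Tendsto (fun t : ℝ => t ^ (β-1)) atTop (nhds 0) := by
      have h0 := tendsto_rpow_neg_atTop (by linarith : (0:ℝ) < 1-β)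
      simpa [neg_sub] using h0
    have hfinal : Tendsto (fun t => x₀ * t ^ (β-1) +
        (1/Real.Gamma β) * ∫ τ in Ioo (0:ℝ) 1, Wr τ * Gr (t*τ)) atTop (nhds 0) := by
      have h1 := hpow.const_mul x₀
      have h2 := hI0.const_mul (1/Real.Gamma β)
      simpa using h1.add h2
    refine Tendsto.congr' ?_ hfinal
    filter_upwards [eventually_gt_atTop (0:ℝ)] with t ht
    rw [hx_eq t ht, hΨr t ht]
  exact ⟨x, hxcont, hx_nonneg, hx_strict, hX, hVolterra, hdecay⟩
end

section
/- For the function y(t) = ∫₀ᵗ (t-s)^{-1/2} (1+√s)^{-1} ds one has, for all t>0, π − (Γ(1/2)Γ(1/3)/Γ(5/6)) t^{-1/6} ≤ y(t) ≤ π, and consequently lim_{t→+∞} y(t) = π. -/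
open MeasureTheory Set Filter

lemma integrableOn_beta_aux {p q t : ℝ} (hp : -1 < p) (hq : -1 < q) (ht : 0 < t) :
    IntegrableOn (fun s => s ^ p * (t - s) ^ q) (Ioo (0:ℝ) t) := by
  have h2 : 0 < t / 2 := by linarith
  have hA : IntervalIntegrable (fun s : ℝ => s ^ p * (t - s) ^ q) volume 0 (t/2) := by
    refine (intervalIntegral.intervalIntegrable_rpow' hp).mul_continuousOn ?_
    have : Set.uIcc (0:ℝ) (t/2) = Set.Icc 0 (t/2) := uIcc_of_le h2.le
    refine ContinuousOn.rpow_const (by fun_prop) ?_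
    intro x hx
    rw [this] at hx
    left
    have := hx.2
    intro h
    have : x = t := by linarith [sub_eq_zero.mp h]
    linarith [hx.2]
  have hB : IntervalIntegrable (fun s : ℝ => s ^ p * (t - s) ^ q) volume (t/2) t := by
    have h1 : IntervalIntegrable (fun s : ℝ => (t - s) ^ q) volume (t/2) t := by
      have := ((intervalIntegral.intervalIntegrable_rpow' hq (a := 0) (b := t/2)).comp_sub_left t).symm
      simpa [sub_zero, show t - t/2 = t/2 by ring] using this
    refine h1.continuousOn_mul ?_
    have huIcc : Set.uIcc (t/2) t = Set.Icc (t/2) t := uIcc_of_le (by linarith)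
    refine ContinuousOn.rpow_const continuousOn_id ?_
    intro x hx
    rw [huIcc] at hx
    exact Or.inl (ne_of_gt (lt_of_lt_of_le h2 hx.1))
  have := (hA.trans hB)
  rw [intervalIntegrable_iff_integrableOn_Ioc_of_le ht.le] at this
  exact this.mono_set Ioo_subset_Ioc_self

lemma beta_real {u v t : ℝ} (hu : 0 < u) (hv : 0 < v) (ht : 0 < t) :
    ∫ s in Ioo (0:ℝ) t, s ^ (u-1) * (t - s) ^ (v-1) =
      t ^ (u+v-1) * (Real.Gamma u * Real.Gamma v / Real.Gamma (u+v)) := by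
  have hΓ : Complex.Gamma u * Complex.Gamma v
      = Complex.Gamma (u+v) * Complex.betaIntegral u v := by
    have := Complex.Gamma_mul_Gamma_eq_betaIntegral
      (s := (u:ℂ)) (t := (v:ℂ)) (by simpa using hu) (by simpa using hv)
    simpa using this
  have hΓne : (Complex.Gamma ((u:ℂ)+(v:ℂ))) ≠ 0 := by
    rw [show ((u:ℂ)+(v:ℂ)) = ((u+v : ℝ) : ℂ) by push_cast; ring, Complex.Gamma_ofReal]
    exact_mod_cast (Real.Gamma_pos_of_pos (by linarith)).ne'
  have hbeta : Complex.betaIntegral u v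
      = ((Real.Gamma u * Real.Gamma v / Real.Gamma (u+v) : ℝ) : ℂ) := by
    have h1 : Complex.betaIntegral u v
        = Complex.Gamma u * Complex.Gamma v / Complex.Gamma ((u:ℂ)+(v:ℂ)) := by
      rw [eq_div_iff hΓne, hΓ]; ring
    rw [h1, show ((u:ℂ)+(v:ℂ)) = ((u+v : ℝ) : ℂ) by push_cast; ring,
      Complex.Gamma_ofReal, Complex.Gamma_ofReal, Complex.Gamma_ofReal]
    push_cast
    ring
  have key := Complex.betaIntegral_scaled (u:ℂ) (v:ℂ) ht
  have h1 : ((∫ s in Ioo (0:ℝ) t, s ^ (u-1) * (t - s) ^ (v-1) : ℝ) : ℂ)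
      = ∫ x in (0:ℝ)..t, (x:ℂ) ^ ((u:ℂ)-1) * ((t:ℂ) - x) ^ ((v:ℂ)-1) := by
    rw [intervalIntegral.integral_of_le ht.le, ← integral_Ioc_eq_integral_Ioo]
    have hcongr : (∫ x in Ioc (0:ℝ) t, (x:ℂ) ^ ((u:ℂ)-1) * ((t:ℂ) - x) ^ ((v:ℂ)-1))
        = ∫ x in Ioc (0:ℝ) t, ((x ^ (u-1) * (t - x) ^ (v-1) : ℝ) : ℂ) := by
      refine setIntegral_congr_ae measurableSet_Ioc ?_
      filter_upwards with x hx
      have hx0 : (0:ℝ) ≤ x := hx.1.le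
      have hx1 : (0:ℝ) ≤ t - x := by linarith [hx.2]
      rw [Complex.ofReal_mul, Complex.ofReal_cpow hx0, Complex.ofReal_cpow hx1]
      push_cast
      rfl
    rw [hcongr]
    exact (integral_ofReal).symm
  rw [key, hbeta] at h1
  have h2 : ((u:ℂ)+(v:ℂ)-1) = ((u+v-1 : ℝ) : ℂ) := by push_cast; ring
  rw [h2, ← Complex.ofReal_cpow ht.le] at h1
  have := h1
  rw [← Complex.ofReal_mul] at this
  exact_mod_cast this

lemma ptwise_lower {s : ℝ} (hs : 0 < s) :
    s ^ (-(1/2):ℝ) - s ^ (-(2/3):ℝ) ≤ (1 + Real.sqrt s)⁻¹ := by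
  have ha : 0 < Real.sqrt s := Real.sqrt_pos.2 hs
  have hsq : Real.sqrt s * Real.sqrt s = s := Real.mul_self_sqrt hs.le
  have h12 : s ^ ((1:ℝ)/2) = Real.sqrt s := by rw [← Real.sqrt_eq_rpow]
  have hhalf : s ^ (-(1/2):ℝ) = (Real.sqrt s)⁻¹ := by
    rw [Real.rpow_neg hs.le, h12]
  have hbound : s ^ ((2:ℝ)/3) ≤ Real.sqrt s * (1 + Real.sqrt s) := by
    have hrhs : Real.sqrt s * (1 + Real.sqrt s) = Real.sqrt s + s := by
      rw [mul_add, mul_one, hsq]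
    rw [hrhs]
    rcases le_total s 1 with h | h
    · have : s ^ ((2:ℝ)/3) ≤ s ^ ((1:ℝ)/2) :=
        Real.rpow_le_rpow_of_exponent_ge hs h (by norm_num)
      rw [h12] at this
      linarith
    · have : s ^ ((2:ℝ)/3) ≤ s ^ ((1:ℝ)) :=
        Real.rpow_le_rpow_of_exponent_le h (by norm_num)
      rw [Real.rpow_one] at this
      have := Real.sqrt_nonneg s
      linarith
  have h23 : (Real.sqrt s * (1 + Real.sqrt s))⁻¹ ≤ s ^ (-(2/3):ℝ) := by
    rw [Real.rpow_neg hs.le]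
    exact inv_anti₀ (Real.rpow_pos_of_pos hs _) hbound
  have hid : (Real.sqrt s)⁻¹ - (Real.sqrt s * (1 + Real.sqrt s))⁻¹
      = (1 + Real.sqrt s)⁻¹ := by
    have h1 : (1 : ℝ) + Real.sqrt s ≠ 0 := by positivity
    field_simp
    ring
  rw [hhalf, ← hid]
  linarith

lemma ptwise_upper {s : ℝ} (hs : 0 < s) :
    (1 + Real.sqrt s)⁻¹ ≤ s ^ (-(1/2):ℝ) := by
  have ha : 0 < Real.sqrt s := Real.sqrt_pos.2 hs
  have h12 : s ^ ((1:ℝ)/2) = Real.sqrt s := by rw [← Real.sqrt_eq_rpow]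
  rw [Real.rpow_neg hs.le, h12]
  exact inv_anti₀ ha (by linarith)

/-- Remark 2.11 in the paper: for `y(t) = ∫₀ᵗ (t-s)^(-1/2) (1+√s)⁻¹ ds` one has
`π − (Γ(1/2)Γ(1/3)/Γ(5/6)) t^(-1/6) ≤ y(t) ≤ π` for all `t > 0`, and consequently
`y(t) → π` as `t → +∞`. -/
theorem stmt_18 :
    (∀ t : ℝ, 0 < t →
      Real.pi - Real.Gamma (1/2) * Real.Gamma (1/3) / Real.Gamma (5/6) * t ^ (-(1/6) : ℝ) ≤
        (∫ s in Ioo (0:ℝ) t, (t - s) ^ (-(1/2) : ℝ) * (1 + Real.sqrt s)⁻¹) ∧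
      (∫ s in Ioo (0:ℝ) t, (t - s) ^ (-(1/2) : ℝ) * (1 + Real.sqrt s)⁻¹) ≤ Real.pi) ∧
    Tendsto (fun t : ℝ => ∫ s in Ioo (0:ℝ) t, (t - s) ^ (-(1/2) : ℝ) * (1 + Real.sqrt s)⁻¹)
      atTop (nhds Real.pi) := by
  have hmain : ∀ t : ℝ, 0 < t →
      Real.pi - Real.Gamma (1/2) * Real.Gamma (1/3) / Real.Gamma (5/6) * t ^ (-(1/6) : ℝ) ≤
        (∫ s in Ioo (0:ℝ) t, (t - s) ^ (-(1/2) : ℝ) * (1 + Real.sqrt s)⁻¹) ∧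
      (∫ s in Ioo (0:ℝ) t, (t - s) ^ (-(1/2) : ℝ) * (1 + Real.sqrt s)⁻¹) ≤ Real.pi := by
    intro t ht
    have hgint : IntegrableOn (fun s : ℝ => s ^ (-(1/2):ℝ) * (t - s) ^ (-(1/2):ℝ))
        (Ioo (0:ℝ) t) := integrableOn_beta_aux (by norm_num) (by norm_num) ht
    have hhint : IntegrableOn (fun s : ℝ => s ^ (-(2/3):ℝ) * (t - s) ^ (-(1/2):ℝ))
        (Ioo (0:ℝ) t) := integrableOn_beta_aux (by norm_num) (by norm_num) ht
    have hgval : ∫ s in Ioo (0:ℝ) t, s ^ (-(1/2):ℝ) * (t - s) ^ (-(1/2):ℝ) = Real.pi := by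
      have h := beta_real (u := 1/2) (v := 1/2) (t := t) (by norm_num) (by norm_num) ht
      rw [show (1/2 - 1 : ℝ) = -(1/2) by norm_num] at h
      rw [h, show (1/2+1/2-1 : ℝ) = 0 by norm_num, Real.rpow_zero,
        show (1/2+1/2 : ℝ) = 1 by norm_num, Real.Gamma_one, Real.Gamma_one_half_eq,
        div_one, one_mul, Real.mul_self_sqrt Real.pi_pos.le]
    have hhval : ∫ s in Ioo (0:ℝ) t, s ^ (-(2/3):ℝ) * (t - s) ^ (-(1/2):ℝ)
        = Real.Gamma (1/2) * Real.Gamma (1/3) / Real.Gamma (5/6) * t ^ (-(1/6):ℝ) := by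
      have h := beta_real (u := 1/3) (v := 1/2) (t := t) (by norm_num) (by norm_num) ht
      rw [show (1/3 - 1 : ℝ) = -(2/3) by norm_num, show (1/2 - 1 : ℝ) = -(1/2) by norm_num,
        show (1/3+1/2-1 : ℝ) = -(1/6) by norm_num, show (1/3+1/2 : ℝ) = 5/6 by norm_num] at h
      rw [h]; ring
    have hfmeas : AEStronglyMeasurable
        (fun s : ℝ => (t - s) ^ (-(1/2):ℝ) * (1 + Real.sqrt s)⁻¹)
        (volume.restrict (Ioo (0:ℝ) t)) := by
      apply Measurable.aestronglyMeasurable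
      fun_prop
    have hfg : ∀ s ∈ Ioo (0:ℝ) t, (t - s) ^ (-(1/2):ℝ) * (1 + Real.sqrt s)⁻¹
        ≤ s ^ (-(1/2):ℝ) * (t - s) ^ (-(1/2):ℝ) := by
      intro s hs
      rw [mul_comm (s ^ (-(1/2):ℝ))]
      exact mul_le_mul_of_nonneg_left (ptwise_upper hs.1)
        (Real.rpow_nonneg (by linarith [hs.2]) _)
    have hfint : IntegrableOn (fun s : ℝ => (t - s) ^ (-(1/2):ℝ) * (1 + Real.sqrt s)⁻¹)
        (Ioo (0:ℝ) t) := by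
      refine Integrable.mono hgint hfmeas ?_
      rw [ae_restrict_iff' measurableSet_Ioo]
      filter_upwards with s hs
      have h1 : (0:ℝ) ≤ (t - s) ^ (-(1/2):ℝ) * (1 + Real.sqrt s)⁻¹ := by
        have : (0:ℝ) ≤ t - s := by linarith [hs.2]
        positivity
      have h2 : (0:ℝ) ≤ s ^ (-(1/2):ℝ) * (t - s) ^ (-(1/2):ℝ) := by
        have h3 : (0:ℝ) ≤ t - s := by linarith [hs.2]
        have h4 : (0:ℝ) ≤ s := hs.1.le
        positivity
      rw [Real.norm_of_nonneg h1, Real.norm_of_nonneg h2]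
      exact hfg s hs
    have hub := setIntegral_mono_on hfint hgint measurableSet_Ioo hfg
    rw [hgval] at hub
    have hlowpt : ∀ s ∈ Ioo (0:ℝ) t,
        s ^ (-(1/2):ℝ) * (t - s) ^ (-(1/2):ℝ) - s ^ (-(2/3):ℝ) * (t - s) ^ (-(1/2):ℝ)
          ≤ (t - s) ^ (-(1/2):ℝ) * (1 + Real.sqrt s)⁻¹ := by
      intro s hs
      have h := ptwise_lower hs.1
      have hpos : (0:ℝ) ≤ (t - s) ^ (-(1/2):ℝ) :=
        Real.rpow_nonneg (by linarith [hs.2]) _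
      rw [mul_comm (s ^ (-(1/2):ℝ)), mul_comm (s ^ (-(2/3):ℝ)), ← mul_sub]
      exact mul_le_mul_of_nonneg_left h hpos
    have hginthh : IntegrableOn (fun s : ℝ =>
        s ^ (-(1/2):ℝ) * (t - s) ^ (-(1/2):ℝ) - s ^ (-(2/3):ℝ) * (t - s) ^ (-(1/2):ℝ))
        (Ioo (0:ℝ) t) := hgint.sub hhint
    have hlb := setIntegral_mono_on hginthh hfint measurableSet_Ioo hlowpt
    rw [integral_sub hgint hhint, hgval, hhval] at hlb
    exact ⟨hlb, hub⟩
  refine ⟨hmain, ?_⟩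
  have h0 : Tendsto (fun t : ℝ => Real.pi -
      Real.Gamma (1/2) * Real.Gamma (1/3) / Real.Gamma (5/6) * t ^ (-(1/6):ℝ))
      atTop (nhds Real.pi) := by
    have h1 : Tendsto (fun t : ℝ => t ^ (-(1/6):ℝ)) atTop (nhds 0) :=
      tendsto_rpow_neg_atTop (by norm_num)
    have h2 := h1.const_mul (Real.Gamma (1/2) * Real.Gamma (1/3) / Real.Gamma (5/6))
    simpa using tendsto_const_nhds.sub h2
  refine tendsto_of_tendsto_of_tendsto_of_le_of_le' h0 tendsto_const_nhds ?_ ?_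
  · filter_upwards [eventually_gt_atTop 0] with t ht using (hmain t ht).1
  · filter_upwards [eventually_gt_atTop 0] with t ht using (hmain t ht).2
end
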